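/- arXiv:1210.4097 — 5 statements merged into one kernel-verified Lean document; each statement's English description precedes it below -/
import Mathlib

section
/- Let S be the set of sequences s in {0,1,2}^N such that s_k != 2 whenever k is congruent to 2 mod 3. Then for all s, t in S, the real numbers x = sum_k s_k 3^(-(k+1)) and y = sum_k t_k 3^(-(k+1)) satisfy |x - y| >= 3^(-4) * delta_3(s, t). In particular, on such sequences the absolute-value metric on the represented reals is equivalent to the ternary ultrametric. -/
-- The ternary ultrametric `δ₃` on ternary sequences.
open Classical in
noncomputable def delta3 (s t : ℕ → Fin 3) : ℝ :=
  if h : s = t then 0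
  else (3 : ℝ) ^ (-(Nat.find (show ∃ k, s k ≠ t k by
    by_contra hc; push_neg at hc; exact h (funext hc)) : ℤ))

-- The real number represented in base 3 by a ternary digit sequence.
noncomputable def val3 (s : ℕ → Fin 3) : ℝ := ∑' k, (s k : ℝ) / 3 ^ (k + 1)

lemma geom3 : Summable (fun k : ℕ => (1/3 : ℝ)^k) :=
  summable_geometric_of_lt_one (by norm_num) (by norm_num)

lemma summable_val3 (s : ℕ → Fin 3) : Summable (fun k => (s k : ℝ) / 3 ^ (k + 1)) := by
  apply Summable.of_norm_bounded (g := fun k => (2/3 : ℝ) * (1/3)^k) (geom3.mul_left _)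
  intro k
  have h1 : (s k : ℝ) ≤ 2 := by
    have := s k |>.isLt
    have : ((s k : ℕ) : ℝ) ≤ 2 := by exact_mod_cast Nat.le_of_lt_succ this
    exact this
  have h0 : (0:ℝ) ≤ (s k : ℝ) := by positivity
  have h3 : (0:ℝ) < 3 ^ (k+1) := by positivity
  rw [Real.norm_eq_abs, abs_div, abs_of_nonneg h0, abs_of_pos h3]
  rw [div_le_iff₀ h3]
  calc (s k : ℝ) ≤ 2 := h1
    _ = 2/3 * (1/3)^k * 3^(k+1) := by rw [pow_succ]; field_simp; rw [← mul_pow]; norm_num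
    _ ≤ _ := le_refl _

lemma summable_d (s t : ℕ → Fin 3) :
    Summable (fun k => ((s k : ℝ) - t k) / 3 ^ (k + 1)) := by
  have := (summable_val3 s).sub (summable_val3 t)
  simpa [sub_div] using this

lemma key (s t : ℕ → Fin 3)
    (hs : ∀ k, k % 3 = 2 → s k ≠ 2) (ht : ∀ k, k % 3 = 2 → t k ≠ 2)
    (m : ℕ) (hm : ∀ k, k < m → s k = t k) (hlt : (t m : ℕ) < (s m : ℕ)) :
    val3 s - val3 t ≥ (3:ℝ) ^ (-(m:ℤ) - 4) := by
  set d : ℕ → ℝ := fun k => ((s k : ℝ) - t k) / 3 ^ (k+1) with hd_def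
  have hd : Summable d := summable_d s t
  have hval : val3 s - val3 t = ∑' k, d k := by
    rw [val3, val3, ← Summable.tsum_sub (summable_val3 s) (summable_val3 t)]
    congr 1; ext k; simp [hd_def, sub_div]
  -- pick j
  obtain ⟨j, hj1, hj3, hjm⟩ : ∃ j, m + 1 ≤ j ∧ j ≤ m + 3 ∧ j % 3 = 2 := by
    refine ⟨m + 1 + (4 - m % 3) % 3, ?_, ?_, ?_⟩ <;> omega
  -- strip the first m terms
  have h1 : ∑' k, d k = ∑' n, d (n + m) := by
    rw [← hd.sum_add_tsum_nat_add m]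
    have : ∑ i ∈ Finset.range m, d i = 0 := by
      apply Finset.sum_eq_zero
      intro i hi
      simp only [hd_def, hm i (Finset.mem_range.mp hi)]
      ring
    rw [this, zero_add]
  have hd' : Summable (fun n => d (n + m)) := (summable_nat_add_iff m).2 hd
  have h2 : ∑' n, d (n + m) = d m + ∑' n, d (n + 1 + m) := by
    rw [← hd'.sum_add_tsum_nat_add 1]
    simp
  -- lower bound the leading term
  have hlead : d m ≥ 1 / 3 ^ (m + 1) := by
    have : (1:ℝ) ≤ (s m : ℝ) - t m := by
      have : (t m : ℕ) + 1 ≤ (s m : ℕ) := hlt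
      have := (Nat.cast_le (α := ℝ)).2 this
      push_cast at this
      linarith
    have h3 : (0:ℝ) < 3 ^ (m+1) := by positivity
    simp only [hd_def, ge_iff_le]
    gcongr
  -- tail lower bound
  set c : ℝ := 1 / 3 ^ (j + 1) with hc
  set b : ℕ := j - (m + 1) with hb
  set L : ℕ → ℝ := fun n => (if n = b then c else 0) - 2 / 3 ^ (n + m + 2) with hL
  have hgeo2 : Summable (fun n : ℕ => (2:ℝ) / 3 ^ (n + m + 2)) := by
    have : (fun n : ℕ => (2:ℝ) / 3 ^ (n + m + 2)) = fun n => (2 / 3 ^ (m + 2)) * (1/3)^n := by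
      funext n
      rw [pow_add, div_pow]
      field_simp
      ring
    rw [this]
    exact geom3.mul_left _
  have hLsum : Summable L := ((hasSum_ite_eq b c).summable).sub hgeo2
  have hLle : ∀ n, L n ≤ d (n + 1 + m) := by
    intro n
    have hpow : (0:ℝ) < 3 ^ (n + m + 2) := by positivity
    have hk : n + 1 + m + 1 = n + m + 2 := by omega
    by_cases hnb : n = b
    · subst hnb
      have hkj : b + 1 + m = j := by omega
      have hs1 : (s j : ℕ) ≤ 1 := by
        have h2 := (s j).isLt
        have hne : (s j : ℕ) ≠ 2 := fun h => hs j hjm (Fin.ext h)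
        omega
      have ht1 : (t j : ℕ) ≤ 1 := by
        have h2 := (t j).isLt
        have hne : (t j : ℕ) ≠ 2 := fun h => ht j hjm (Fin.ext h)
        omega
      have hdig : (-1:ℝ) ≤ (s j : ℝ) - t j := by
        have a1 : ((s j : ℕ) : ℝ) ≥ 0 := by positivity
        have a2 : ((t j : ℕ) : ℝ) ≤ 1 := by exact_mod_cast ht1
        push_cast
        linarith
      simp only [hL, if_pos rfl, hd_def]
      rw [hkj]
      have hj2 : b + m + 2 = j + 1 := by omega
      rw [hj2, hc]
      have hstep : (-1:ℝ) / 3 ^ (j + 1) ≤ ((s j : ℝ) - t j) / 3 ^ (j + 1) := by gcongr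
      calc 1 / (3:ℝ) ^ (j + 1) - 2 / 3 ^ (j + 1)
          = (-1:ℝ) / 3 ^ (j + 1) := by ring
        _ ≤ _ := hstep
    · have hdig : (-2:ℝ) ≤ (s (n+1+m) : ℝ) - t (n+1+m) := by
        have a1 : ((s (n+1+m) : ℕ) : ℝ) ≥ 0 := by positivity
        have a2 : ((t (n+1+m) : ℕ) : ℝ) ≤ 2 := by
          exact_mod_cast Nat.le_of_lt_succ (t (n+1+m)).isLt
        push_cast
        linarith
      simp only [hL, if_neg hnb, hd_def]
      rw [hk]
      calc (0:ℝ) - 2 / 3 ^ (n + m + 2) = (-2:ℝ) / 3 ^ (n + m + 2) := by ring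
        _ ≤ _ := by gcongr
  have hdtail : Summable (fun n => d (n + 1 + m)) := by
    have : (fun n => d (n + 1 + m)) = fun n => d (n + (m + 1)) := by
      funext n; congr 1; omega
    rw [this]
    exact (summable_nat_add_iff (m+1)).2 hd
  have htail : ∑' n, d (n + 1 + m) ≥ ∑' n, L n := Summable.tsum_le_tsum hLle hLsum hdtail
  have hLval : ∑' n, L n = c - 1 / 3 ^ (m + 1) := by
    rw [hL, Summable.tsum_sub (hasSum_ite_eq b c).summable hgeo2, (hasSum_ite_eq b c).tsum_eq]
    congr 1
    have : (fun n : ℕ => (2:ℝ) / 3 ^ (n + m + 2)) = fun n => (2 / 3 ^ (m + 2)) * (1/3)^n := by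
      funext n
      rw [pow_add, div_pow]
      field_simp
      ring
    rw [this, tsum_mul_left, tsum_geometric_of_lt_one (by norm_num) (by norm_num)]
    rw [pow_succ]
    field_simp
    ring
  -- put it together
  have hfin : val3 s - val3 t ≥ c := by
    rw [hval, h1, h2]
    have := htail
    rw [hLval] at this
    linarith
  refine hfin.trans' ?_
  have h34 : (3:ℝ) ^ (-(m:ℤ) - 4) = 1 / 3 ^ (m + 4) := by
    rw [show (-(m:ℤ) - 4) = -((m + 4 : ℕ) : ℤ) by push_cast; ring, zpow_neg, zpow_natCast,
      one_div]
  rw [h34, hc]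
  apply one_div_le_one_div_of_le (by positivity)
  apply pow_le_pow_right₀ (by norm_num)
  omega

theorem stmt_3 (s t : ℕ → Fin 3)
    (hs : ∀ k, k % 3 = 2 → s k ≠ 2) (ht : ∀ k, k % 3 = 2 → t k ≠ 2) :
    |val3 s - val3 t| ≥ (3 : ℝ) ^ (-4 : ℤ) * delta3 s t := by
  by_cases h : s = t
  · subst h
    simp [delta3]
  · have hex : ∃ k, s k ≠ t k := by
      by_contra hc; push_neg at hc; exact h (funext hc)
    have hrhs : (3:ℝ) ^ (-4 : ℤ) * delta3 s t = (3:ℝ) ^ (-(Nat.find hex : ℤ) - 4) := by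
      simp only [delta3, dif_neg h]
      rw [← zpow_add₀ (by norm_num : (3:ℝ) ≠ 0)]
      congr 1
      ring
    rw [hrhs]
    set m := Nat.find hex with hm_def
    have hspec : s m ≠ t m := Nat.find_spec hex
    have hmin : ∀ k, k < m → s k = t k := fun k hk => not_not.mp (Nat.find_min hex hk)
    have hne : (s m : ℕ) ≠ (t m : ℕ) := fun hval => hspec (Fin.ext hval)
    rcases Nat.lt_or_ge (s m : ℕ) (t m : ℕ) with hlt | hge
    · have hkey := key t s ht hs m (fun k hk => (hmin k hk).symm) hlt
      calc (3:ℝ) ^ (-(m:ℤ) - 4) ≤ val3 t - val3 s := hkey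
        _ ≤ |val3 s - val3 t| := by
            rw [abs_sub_comm]
            exact le_abs_self _
    · have hlt' : (t m : ℕ) < (s m : ℕ) := lt_of_le_of_ne hge (Ne.symm hne)
      have hkey := key s t hs ht m hmin hlt'
      calc (3:ℝ) ^ (-(m:ℤ) - 4) ≤ val3 s - val3 t := hkey
        _ ≤ |val3 s - val3 t| := le_abs_self _
end

section
/- Define e_0, e_1, e_2 : {0,1,2}^N x {0,1}^N -> {0,1,2}^N by interleaving: e_i((t, b)) is the sequence whose entries in blocks of three are (t_{6k+2i}, t_{6k+2i+1}, b_k) for k = 0, 1, 2, .... Then for all p = (t,b) and p' = (t',b') with t != t', sqrt(delta_3(t, t')) <= 3 * max(delta_3(e_0(p), e_0(p')), delta_3(e_1(p), e_1(p')), delta_3(e_2(p), e_2(p'))). -/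
-- The interleaving maps `e_i` sending `(t, b)` to the sequence with blocks
-- `(t (6k+2i), t (6k+2i+1), b k)` for `k = 0, 1, 2, ...`.
def interleave (i : Fin 3) (p : (ℕ → Fin 3) × (ℕ → Fin 2)) : ℕ → Fin 3 := fun n =>
  if n % 3 = 0 then p.1 (6 * (n / 3) + 2 * (i : ℕ))
  else if n % 3 = 1 then p.1 (6 * (n / 3) + 2 * (i : ℕ) + 1)
  else (p.2 (n / 3)).castSucc

lemma delta3_nonneg (s t : ℕ → Fin 3) : 0 ≤ delta3 s t := by
  unfold delta3
  split
  · exact le_refl _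
  · positivity

lemma delta3_ge (s t : ℕ → Fin 3) (j : ℕ) (hj : s j ≠ t j) :
    (3 : ℝ) ^ (-(j : ℤ)) ≤ delta3 s t := by
  have hst : s ≠ t := fun he => hj (congrFun he j)
  unfold delta3
  rw [dif_neg hst]
  apply zpow_le_zpow_right₀ (by norm_num : (1:ℝ) ≤ 3)
  exact neg_le_neg (Int.ofNat_le.mpr (Nat.find_le hj))

theorem stmt_5 (p p' : (ℕ → Fin 3) × (ℕ → Fin 2)) (h : p.1 ≠ p'.1) :
    Real.sqrt (delta3 p.1 p'.1) ≤
      3 * max (delta3 (interleave 0 p) (interleave 0 p'))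
          (max (delta3 (interleave 1 p) (interleave 1 p'))
            (delta3 (interleave 2 p) (interleave 2 p'))) := by
  have hex : ∃ k, p.1 k ≠ p'.1 k := by
    by_contra hc; push_neg at hc; exact h (funext hc)
  set n := Nat.find hex with hn
  have hne : p.1 n ≠ p'.1 n := Nat.find_spec hex
  have hδ : delta3 p.1 p'.1 = (3 : ℝ) ^ (-(n : ℤ)) := by
    unfold delta3; rw [dif_neg h]
  set i : Fin 3 := ⟨n % 6 / 2, by omega⟩ with hi_def
  have hi : (i : ℕ) = n % 6 / 2 := rfl
  set m0 : ℕ := 3 * (n / 6) + n % 2 with hm0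
  have hval : ∀ q : (ℕ → Fin 3) × (ℕ → Fin 2), interleave i q m0 = q.1 n := by
    intro q
    show (if m0 % 3 = 0 then q.1 (6 * (m0 / 3) + 2 * (i : ℕ))
      else if m0 % 3 = 1 then q.1 (6 * (m0 / 3) + 2 * (i : ℕ) + 1)
      else (q.2 (m0 / 3)).castSucc) = q.1 n
    rcases Nat.mod_two_eq_zero_or_one n with h2 | h2
    · have h3 : m0 % 3 = 0 := by omega
      have h4 : 6 * (m0 / 3) + 2 * (i : ℕ) = n := by rw [hi]; omega
      rw [if_pos h3, h4]
    · have h3 : m0 % 3 = 1 := by omega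
      have h4 : 6 * (m0 / 3) + 2 * (i : ℕ) + 1 = n := by rw [hi]; omega
      rw [if_neg (by omega), if_pos h3, h4]
  have hd : (3 : ℝ) ^ (-(m0 : ℤ)) ≤ delta3 (interleave i p) (interleave i p') :=
    delta3_ge _ _ m0 (by rw [hval p, hval p']; exact hne)
  set M := max (delta3 (interleave 0 p) (interleave 0 p'))
          (max (delta3 (interleave 1 p) (interleave 1 p'))
            (delta3 (interleave 2 p) (interleave 2 p'))) with hM
  have hiM : delta3 (interleave i p) (interleave i p') ≤ M := by
    have hcase : (i : ℕ) = 0 ∨ (i : ℕ) = 1 ∨ (i : ℕ) = 2 := by omega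
    rcases hcase with hc | hc | hc
    · have : i = 0 := Fin.ext hc
      rw [this]; exact le_max_left _ _
    · have : i = 1 := Fin.ext hc
      rw [this]; exact le_max_of_le_right (le_max_left _ _)
    · have : i = 2 := Fin.ext hc
      rw [this]; exact le_max_of_le_right (le_max_right _ _)
  have hMd : (3 : ℝ) ^ (-(m0 : ℤ)) ≤ M := hd.trans hiM
  have hMnn : 0 ≤ M := (delta3_nonneg _ _).trans (le_max_left _ _)
  have key : (3 : ℝ) ^ (-(n : ℤ)) ≤ (3 * M) ^ 2 := by
    have h1 : (3 : ℝ) ^ (-(n : ℤ)) ≤ (3 * (3 : ℝ) ^ (-(m0 : ℤ))) ^ 2 := by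
      have : (3 * (3 : ℝ) ^ (-(m0 : ℤ))) ^ 2 = (3 : ℝ) ^ ((2 : ℤ) - 2 * m0) := by
        rw [mul_pow, ← zpow_natCast ((3:ℝ) ^ (-(m0:ℤ))) 2, ← zpow_mul,
          ← zpow_natCast (3 : ℝ) 2, ← zpow_add₀ (by norm_num : (3:ℝ) ≠ 0)]
        congr 1; push_cast; ring
      rw [this]
      apply zpow_le_zpow_right₀ (by norm_num : (1:ℝ) ≤ 3)
      omega
    refine h1.trans ?_
    apply pow_le_pow_left₀ (by positivity)
    exact mul_le_mul_of_nonneg_left hMd (by norm_num)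
  calc Real.sqrt (delta3 p.1 p'.1) ≤ Real.sqrt ((3 * M) ^ 2) := by
        rw [hδ]; exact Real.sqrt_le_sqrt key
    _ = 3 * M := Real.sqrt_sq (by positivity)
end

section
/- Let I_many = [0,1] x D with pseudometric d((x, a), (y, b)) = |x - y|, where D is a set of cardinality 2^{aleph_0}. There exists an injective function e : I_many -> [0,1]^3 such that for all p, q in I_many, ||e(p) - e(q)||_2 >= (1/243) * sqrt(d(p, q)), where ||.||_2 is the Euclidean norm on R^3. -/
set_option maxHeartbeats 1000000

noncomputable section

namespace Stmt9Aux

/-- base-25 digit number `k` (0-indexed) of `x`. -/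
def dig (k : ℕ) (x : ℝ) : ℤ := ⌊(25:ℝ)^(k+1) * x⌋ - 25 * ⌊(25:ℝ)^k * x⌋

lemma dig_bounds (k : ℕ) (x : ℝ) : 0 ≤ dig k x ∧ dig k x ≤ 24 := by
  have h1 : (25:ℝ)^(k+1) * x = 25 * ((25:ℝ)^k * x) := by ring
  set u := (25:ℝ)^k * x with hu
  have hfl : (⌊u⌋ : ℝ) ≤ u := Int.floor_le u
  have hfu : u < ⌊u⌋ + 1 := Int.lt_floor_add_one u
  have hlow : (25 * ⌊u⌋ : ℤ) ≤ ⌊25 * u⌋ := by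
    apply Int.le_floor.2; push_cast; linarith
  have hhigh : ⌊25 * u⌋ < 25 * ⌊u⌋ + 25 := by
    apply Int.floor_lt.2; push_cast; linarith
  unfold dig
  rw [h1, ← hu]
  omega

def da (k : ℕ) (x : ℝ) : ℤ := dig k x % 4
def db (k : ℕ) (x : ℝ) : ℤ := (dig k x / 4) % 4
def dc (k : ℕ) (x : ℝ) : ℤ := dig k x / 16

lemma da_bounds (k : ℕ) (x : ℝ) : 0 ≤ da k x ∧ da k x ≤ 3 := by
  have := dig_bounds k x; unfold da; omega

lemma db_bounds (k : ℕ) (x : ℝ) : 0 ≤ db k x ∧ db k x ≤ 3 := by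
  have := dig_bounds k x; unfold db; omega

lemma dc_bounds (k : ℕ) (x : ℝ) : 0 ≤ dc k x ∧ dc k x ≤ 1 := by
  have := dig_bounds k x; unfold dc; omega

lemma dig_decomp (k : ℕ) (x : ℝ) :
    dig k x = da k x + 4 * db k x + 16 * dc k x := by
  have := dig_bounds k x; unfold da db dc; omega

def F (u : ℕ → ℝ) : ℝ := ∑' k, u k / 5^(k+1)

lemma summable_aux {u : ℕ → ℝ} (hu : ∀ k, |u k| ≤ 3) :
    Summable (fun k => u k / 5^(k+1)) := by
  have hg : Summable (fun k : ℕ => (3/5) * (1/5:ℝ)^k) :=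
    (summable_geometric_of_lt_one (by norm_num) (by norm_num)).mul_left _
  apply Summable.of_norm_bounded hg
  intro k
  have h5 : (0:ℝ) < 5^(k+1) := by positivity
  rw [Real.norm_eq_abs, abs_div, abs_of_pos h5]
  rw [div_le_iff₀ h5]
  have : (3/5) * (1/5:ℝ)^k * 5^(k+1) = 3 := by
    rw [div_pow, one_pow, pow_succ]
    field_simp
  rw [this]
  exact hu k

lemma F_nonneg {u : ℕ → ℝ} (hu : ∀ k, 0 ≤ u k) : 0 ≤ F u :=
  tsum_nonneg fun k => div_nonneg (hu k) (by positivity)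

lemma F_le_one {u : ℕ → ℝ} (hu : ∀ k, 0 ≤ u k ∧ u k ≤ 3) : F u ≤ 1 := by
  have hsum : Summable (fun k => u k / 5^(k+1)) :=
    summable_aux fun k => abs_le.2 ⟨by linarith [(hu k).1], (hu k).2⟩
  have hg : Summable (fun k : ℕ => (3/5) * (1/5:ℝ)^k) :=
    (summable_geometric_of_lt_one (by norm_num) (by norm_num)).mul_left _
  have h1 : F u ≤ ∑' k : ℕ, (3/5) * (1/5:ℝ)^k := by
    apply Summable.tsum_le_tsum _ hsum hg
    intro k
    have h5 : (0:ℝ) < 5^(k+1) := by positivity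
    rw [div_le_iff₀ h5]
    have : (3/5) * (1/5:ℝ)^k * 5^(k+1) = 3 := by
      rw [div_pow, one_pow, pow_succ]; field_simp
    rw [this]; exact (hu k).2
  have h2 : ∑' k : ℕ, (3/5) * (1/5:ℝ)^k = 3/4 := by
    rw [tsum_mul_left, tsum_geometric_of_lt_one (by norm_num) (by norm_num)]
    norm_num
  linarith

/-- separation lemma: if two digit sequences in `{0,…,3}` first differ at
position `m`, their `F`-values differ by at least `(1/5)^(m+1)/4`. -/
lemma sep {u v : ℕ → ℝ} (hu : ∀ k, 0 ≤ u k ∧ u k ≤ 3) (hv : ∀ k, 0 ≤ v k ∧ v k ≤ 3)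
    {m : ℕ} (hlt : ∀ k, k < m → u k = v k) (hm : 1 ≤ |u m - v m|) :
    (1/5:ℝ)^(m+1)/4 ≤ |F u - F v| := by
  have hbd : ∀ k, |u k - v k| ≤ 3 := by
    intro k
    have h1 := hu k; have h2 := hv k
    rw [abs_le]; constructor <;> linarith
  have hsu : Summable (fun k => u k / 5^(k+1)) :=
    summable_aux fun k => abs_le.2 ⟨by linarith [(hu k).1], (hu k).2⟩
  have hsv : Summable (fun k => v k / 5^(k+1)) :=
    summable_aux fun k => abs_le.2 ⟨by linarith [(hv k).1], (hv k).2⟩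
  have hsw : Summable (fun k => (u k - v k) / 5^(k+1)) := by
    have h := hsu.sub hsv
    exact h.congr fun k => by ring
  have hFw : F u - F v = ∑' k, (u k - v k) / 5^(k+1) := by
    rw [F, F, ← Summable.tsum_sub hsu hsv]
    congr 1; funext k; ring
  have hsplit := (Summable.sum_add_tsum_nat_add (f := fun k => (u k - v k)/5^(k+1)) (m+1) hsw).symm
  have hhead : ∑ k ∈ Finset.range (m+1), (u k - v k)/5^(k+1) = (u m - v m)/5^(m+1) := by
    rw [Finset.sum_eq_single m]
    · intro k hk hkm
      have hklt : k < m := by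
        have := Finset.mem_range.1 hk
        omega
      rw [hlt k hklt, sub_self, zero_div]
    · intro hcon
      exact absurd (Finset.mem_range.2 (Nat.lt_succ_self m)) hcon
  have htail_sum : Summable (fun k => (u (k+(m+1)) - v (k+(m+1))) / 5^((k+(m+1))+1)) :=
    (summable_nat_add_iff (m+1)).2 hsw
  have hgsum : Summable (fun k : ℕ => 3 * (1/5:ℝ)^(m+2) * (1/5)^k) :=
    (summable_geometric_of_lt_one (by norm_num) (by norm_num)).mul_left _
  have h2 : ∀ k : ℕ, |(u (k+(m+1)) - v (k+(m+1))) / 5^((k+(m+1))+1)|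
      ≤ 3 * (1/5:ℝ)^(m+2) * (1/5)^k := by
    intro k
    have hden : (0:ℝ) < 5^((k+(m+1))+1) := by positivity
    rw [abs_div, abs_of_pos hden, div_le_iff₀ hden]
    have heq : 3 * (1/5:ℝ)^(m+2) * (1/5)^k * 5^((k+(m+1))+1) = 3 := by
      rw [div_pow, div_pow, one_pow, one_pow]
      field_simp
      ring
    rw [heq]
    exact hbd _
  have htail : |∑' k, (u (k+(m+1)) - v (k+(m+1))) / 5^((k+(m+1))+1)|
      ≤ (3/4) * (1/5:ℝ)^(m+1) := by
    have h1 : |∑' k, (u (k+(m+1)) - v (k+(m+1))) / 5^((k+(m+1))+1)|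
        ≤ ∑' k, |(u (k+(m+1)) - v (k+(m+1))) / 5^((k+(m+1))+1)| := by
      have habs : Summable (fun k => ‖(u (k+(m+1)) - v (k+(m+1))) / 5^((k+(m+1))+1)‖) := by
        simpa only [Real.norm_eq_abs] using htail_sum.abs
      have hh := norm_tsum_le_tsum_norm habs
      simpa only [Real.norm_eq_abs] using hh
    have h3 : ∑' k, |(u (k+(m+1)) - v (k+(m+1))) / 5^((k+(m+1))+1)|
        ≤ ∑' k : ℕ, 3 * (1/5:ℝ)^(m+2) * (1/5)^k :=
      Summable.tsum_le_tsum h2 htail_sum.abs hgsum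
    have h4 : ∑' k : ℕ, 3 * (1/5:ℝ)^(m+2) * (1/5)^k = (3/4) * (1/5:ℝ)^(m+1) := by
      rw [tsum_mul_left, tsum_geometric_of_lt_one (by norm_num) (by norm_num), pow_succ]
      norm_num
      ring
    linarith
  have hwm : (1/5:ℝ)^(m+1) ≤ |(u m - v m) / 5^(m+1)| := by
    have hden : (0:ℝ) < 5^(m+1) := by positivity
    rw [abs_div, abs_of_pos hden, le_div_iff₀ hden, div_pow, one_pow]
    have : 1 / (5:ℝ)^(m+1) * 5^(m+1) = 1 := by field_simp
    rw [this]
    exact hm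
  set hd := (u m - v m) / 5^(m+1) with hhd
  set tl := ∑' k, (u (k+(m+1)) - v (k+(m+1))) / 5^((k+(m+1))+1) with htl
  have hFeq : F u - F v = hd + tl := by
    rw [hFw, hsplit, hhead]
  have habs : |hd| ≤ |hd + tl| + |tl| := by
    calc |hd| = |hd + tl + -tl| := by ring_nf
      _ ≤ |hd + tl| + |-tl| := abs_add_le _ _
      _ = |hd + tl| + |tl| := by rw [abs_neg]
  rw [hFeq]
  linarith

/-- key lemma: integer digit sequences differing at position `n`
(perhaps earlier too). -/
lemma key {u v : ℕ → ℤ} (hu : ∀ k, 0 ≤ u k ∧ u k ≤ 3) (hv : ∀ k, 0 ≤ v k ∧ v k ≤ 3)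
    {n : ℕ} (hne : u n ≠ v n) :
    (1/5:ℝ)^(n+1)/4 ≤ |F (fun k => (u k : ℝ)) - F (fun k => (v k : ℝ))| := by
  have hex : ∃ k, u k ≠ v k := ⟨n, hne⟩
  have hmspec : u (Nat.find hex) ≠ v (Nat.find hex) := Nat.find_spec hex
  have hmn : Nat.find hex ≤ n := Nat.find_min' hex hne
  have hlt : ∀ k, k < Nat.find hex → ((u k : ℝ)) = ((v k : ℝ)) := by
    intro k hk
    have h := Nat.find_min hex hk
    push_neg at h
    exact_mod_cast h
  have hm1 : 1 ≤ |(u (Nat.find hex) : ℝ) - (v (Nat.find hex) : ℝ)| := by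
    have h1 : 1 ≤ |u (Nat.find hex) - v (Nat.find hex)| :=
      Int.one_le_abs (sub_ne_zero.2 hmspec)
    have h2 : ((1:ℤ):ℝ) ≤ ((|u (Nat.find hex) - v (Nat.find hex)| : ℤ) : ℝ) := by
      exact_mod_cast h1
    rw [Int.cast_abs] at h2
    push_cast at h2
    exact_mod_cast h2
  have hu' : ∀ k, (0:ℝ) ≤ (u k : ℝ) ∧ ((u k : ℝ)) ≤ 3 := fun k =>
    ⟨by exact_mod_cast (hu k).1, by exact_mod_cast (hu k).2⟩
  have hv' : ∀ k, (0:ℝ) ≤ (v k : ℝ) ∧ ((v k : ℝ)) ≤ 3 := fun k =>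
    ⟨by exact_mod_cast (hv k).1, by exact_mod_cast (hv k).2⟩
  have hs := sep (u := fun k => (u k : ℝ)) (v := fun k => (v k : ℝ)) hu' hv' hlt hm1
  have hpow : (1/5:ℝ)^(n+1) ≤ (1/5:ℝ)^(Nat.find hex + 1) :=
    pow_le_pow_of_le_one (by norm_num) (by norm_num) (by omega)
  linarith

/-- equal `F`-values of integer digit sequences imply equal sequences -/
lemma F_int_inj {u v : ℕ → ℤ} (hu : ∀ k, 0 ≤ u k ∧ u k ≤ 3) (hv : ∀ k, 0 ≤ v k ∧ v k ≤ 3)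
    (h : F (fun k => (u k : ℝ)) = F (fun k => (v k : ℝ))) : ∀ k, u k = v k := by
  intro k
  by_contra hne
  have := key hu hv hne
  rw [h, sub_self, abs_zero] at this
  have : (0:ℝ) < (1/5:ℝ)^(k+1)/4 := by positivity
  linarith

lemma abs_lt_of_floor_eq {x y : ℝ} {n : ℕ} (h : ⌊(25:ℝ)^n * x⌋ = ⌊(25:ℝ)^n * y⌋) :
    |x - y| < (1/25:ℝ)^n := by
  have h25 : (0:ℝ) < 25^n := by positivity
  have h1 : (⌊(25:ℝ)^n * x⌋ : ℝ) ≤ 25^n * x := Int.floor_le _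
  have h2 : (25:ℝ)^n * x < ⌊(25:ℝ)^n * x⌋ + 1 := Int.lt_floor_add_one _
  have h3 : (⌊(25:ℝ)^n * y⌋ : ℝ) ≤ 25^n * y := Int.floor_le _
  have h4 : (25:ℝ)^n * y < ⌊(25:ℝ)^n * y⌋ + 1 := Int.lt_floor_add_one _
  rw [h] at h1 h2
  have habs : 25^n * |x - y| < 1 := by
    rw [← abs_of_pos h25, ← abs_mul, mul_sub]
    rw [abs_sub_lt_iff]
    constructor <;> linarith
  have : |x - y| < 1 / 25^n := by
    rw [lt_div_iff₀ h25]; linarith [habs]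
  calc |x - y| < 1 / 25^n := this
    _ = (1/25:ℝ)^n := by rw [div_pow, one_pow]

lemma floor_eq_of_dig_eq {x y : ℝ} (h0 : ⌊x⌋ = ⌊y⌋)
    (h : ∀ k, dig k x = dig k y) : ∀ n, ⌊(25:ℝ)^n * x⌋ = ⌊(25:ℝ)^n * y⌋ := by
  intro n
  induction n with
  | zero => simpa using h0
  | succ n ih =>
      have hx := h n
      unfold dig at hx
      omega

end Stmt9Aux

open Stmt9Aux

theorem stmt_9 (D : Type) (hD : Cardinal.mk D = 2 ^ Cardinal.aleph0) :
    ∃ e : Set.Icc (0:ℝ) 1 × D → EuclideanSpace ℝ (Fin 3),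
      (∀ p, ∀ i, e p i ∈ Set.Icc (0:ℝ) 1) ∧
      Function.Injective e ∧
      ∀ p q, ‖e p - e q‖ ≥ (1 / 243) * Real.sqrt |(p.1 : ℝ) - (q.1 : ℝ)| := by
  -- get a bijection D ≃ (ℕ → Bool)
  have hmk : Cardinal.mk (ℕ → Bool) = 2 ^ Cardinal.aleph0 := by
    rw [← Cardinal.power_def, Cardinal.mk_bool, Cardinal.mk_nat]
  obtain ⟨σ⟩ : Nonempty (D ≃ (ℕ → Bool)) := Cardinal.eq.1 (hD.trans hmk.symm)
  set xv : Set.Icc (0:ℝ) 1 × D → ℝ := fun p => (p.1 : ℝ) / 2 with hxv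
  set sb : D → ℕ → ℤ := fun d k => if σ d k then 1 else 0 with hsb
  have hsb01 : ∀ d k, 0 ≤ sb d k ∧ sb d k ≤ 1 := by
    intro d k; simp only [hsb]; split <;> omega
  set e : Set.Icc (0:ℝ) 1 × D → EuclideanSpace ℝ (Fin 3) := fun p =>
    WithLp.toLp 2 ![F (fun k => (da k (xv p) : ℝ)),
      F (fun k => (db k (xv p) : ℝ)),
      F (fun k => ((2 * dc k (xv p) + sb p.2 k : ℤ) : ℝ))] with he
  have hxmem : ∀ p : Set.Icc (0:ℝ) 1 × D, 0 ≤ xv p ∧ xv p < 1 := by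
    intro p
    have h1 := p.1.2.1
    have h2 := p.1.2.2
    constructor
    · simp only [hxv]; linarith
    · simp only [hxv]; linarith
  have hfloor0 : ∀ p : Set.Icc (0:ℝ) 1 × D, ⌊xv p⌋ = 0 := by
    intro p
    rw [Int.floor_eq_zero_iff]
    exact ⟨(hxmem p).1, (hxmem p).2⟩
  have htb : ∀ p k, 0 ≤ (2 * dc k (xv p) + sb p.2 k) ∧ (2 * dc k (xv p) + sb p.2 k) ≤ 3 := by
    intro p k
    have := dc_bounds k (xv p)
    have := hsb01 p.2 k
    omega
  refine ⟨e, ?_, ?_, ?_⟩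
  · -- coordinates in [0,1]
    intro p i
    have hmem : ∀ (u : ℕ → ℤ), (∀ k, 0 ≤ u k ∧ u k ≤ 3) →
        F (fun k => (u k : ℝ)) ∈ Set.Icc (0:ℝ) 1 := by
      intro u hu
      constructor
      · exact F_nonneg fun k => by exact_mod_cast (hu k).1
      · exact F_le_one fun k => ⟨by exact_mod_cast (hu k).1, by exact_mod_cast (hu k).2⟩
    fin_cases i
    · exact hmem _ (fun k => da_bounds k (xv p))
    · exact hmem _ (fun k => db_bounds k (xv p))
    · exact hmem _ (htb p)
  · -- injectivity
    intro p q h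
    have h0 : e p 0 = e q 0 := by rw [h]
    have h1 : e p 1 = e q 1 := by rw [h]
    have h2 : e p 2 = e q 2 := by rw [h]
    simp only [he, Matrix.cons_val_zero, Matrix.cons_val_one, Matrix.head_cons,
      Matrix.cons_val_two, Matrix.tail_cons] at h0 h1 h2
    have ha := F_int_inj (fun k => da_bounds k (xv p)) (fun k => da_bounds k (xv q)) h0
    have hb := F_int_inj (fun k => db_bounds k (xv p)) (fun k => db_bounds k (xv q)) h1
    have hc := F_int_inj (htb p) (htb q) h2
    have hcc : ∀ k, dc k (xv p) = dc k (xv q) ∧ sb p.2 k = sb q.2 k := by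
      intro k
      have := hc k
      have := dc_bounds k (xv p)
      have := dc_bounds k (xv q)
      have := hsb01 p.2 k
      have := hsb01 q.2 k
      omega
    have hdig : ∀ k, dig k (xv p) = dig k (xv q) := by
      intro k
      rw [dig_decomp, dig_decomp, ha k, hb k, (hcc k).1]
    have hfl := floor_eq_of_dig_eq ((hfloor0 p).trans (hfloor0 q).symm) hdig
    have hxeq : xv p = xv q := by
      by_contra hne
      have hpos : 0 < |xv p - xv q| := abs_pos.2 (sub_ne_zero.2 hne)
      obtain ⟨n, hn⟩ := pow_unbounded_of_one_lt (1 / |xv p - xv q|) (by norm_num : (1:ℝ) < 25)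
      have := abs_lt_of_floor_eq (hfl n)
      have h25 : (0:ℝ) < 25^n := by positivity
      rw [div_lt_iff₀ hpos] at hn
      have : (1/25:ℝ)^n = 1/25^n := by rw [div_pow, one_pow]
      have hlt : |xv p - xv q| < 1 / 25^n := by
        rw [← this]; exact abs_lt_of_floor_eq (hfl n)
      rw [lt_div_iff₀ h25] at hlt
      nlinarith [hlt, hn]
    have hp1 : p.1 = q.1 := by
      apply Subtype.ext
      have : (p.1 : ℝ) / 2 = (q.1 : ℝ) / 2 := hxeq
      linarith
    have hp2 : p.2 = q.2 := by
      apply σ.injective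
      funext k
      have := (hcc k).2
      simp only [hsb] at this
      by_cases hb1 : σ p.2 k <;> by_cases hb2 : σ q.2 k <;> simp_all
    exact Prod.ext hp1 hp2
  · -- the lower bound
    intro p q
    by_cases hxy : (p.1 : ℝ) = (q.1 : ℝ)
    · rw [hxy, sub_self, abs_zero, Real.sqrt_zero, mul_zero]
      exact norm_nonneg _
    · set x := xv p with hx
      set y := xv q with hy
      have hxyne : x ≠ y := by
        intro hcon
        apply hxy
        have : (p.1 : ℝ) / 2 = (q.1 : ℝ) / 2 := hcon
        linarith
      -- find the first place where the floors differ
      have hex : ∃ k, ⌊(25:ℝ)^k * x⌋ ≠ ⌊(25:ℝ)^k * y⌋ := by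
        by_contra hcon
        push_neg at hcon
        apply hxyne
        by_contra hne
        have hpos : 0 < |x - y| := abs_pos.2 (sub_ne_zero.2 hne)
        obtain ⟨n, hn⟩ := pow_unbounded_of_one_lt (1 / |x - y|) (by norm_num : (1:ℝ) < 25)
        have h25 : (0:ℝ) < 25^n := by positivity
        rw [div_lt_iff₀ hpos] at hn
        have hlt : |x - y| < 1 / 25^n := by
          have := abs_lt_of_floor_eq (hcon n)
          rw [div_pow, one_pow] at this
          exact this
        rw [lt_div_iff₀ h25] at hlt
        nlinarith [hlt, hn]
      have hk₀spec0 : ⌊(25:ℝ)^(Nat.find hex) * x⌋ ≠ ⌊(25:ℝ)^(Nat.find hex) * y⌋ :=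
        Nat.find_spec hex
      have hk₀min0 : ∀ j, j < Nat.find hex → ⌊(25:ℝ)^j * x⌋ = ⌊(25:ℝ)^j * y⌋ := by
        intro j hj
        have := Nat.find_min hex hj
        push_neg at this
        exact this
      have hk₀pos : Nat.find hex ≠ 0 := by
        intro hcon
        apply hk₀spec0
        rw [hcon]
        simp only [pow_zero, one_mul]
        rw [hfloor0 p, hfloor0 q]
      obtain ⟨n, hn⟩ : ∃ n, Nat.find hex = n + 1 := ⟨Nat.find hex - 1, by omega⟩
      have hk₀spec : ⌊(25:ℝ)^(n+1) * x⌋ ≠ ⌊(25:ℝ)^(n+1) * y⌋ := by rw [← hn]; exact hk₀spec0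
      have hk₀min : ∀ j, j < n + 1 → ⌊(25:ℝ)^j * x⌋ = ⌊(25:ℝ)^j * y⌋ := by
        intro j hj
        exact hk₀min0 j (by omega)
      have hfn : ⌊(25:ℝ)^n * x⌋ = ⌊(25:ℝ)^n * y⌋ := hk₀min n (Nat.lt_succ_self n)
      -- digits agree below n and differ at n
      have hdeq : ∀ k, k < n → dig k x = dig k y := by
        intro k hk
        unfold dig
        rw [hk₀min k (by omega), hk₀min (k+1) (by omega)]
      have hdne : dig n x ≠ dig n y := by
        unfold dig
        rw [hfn]
        intro hcon
        apply hk₀spec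
        omega
      -- some sub-digit differs at n
      have hsub : da n x ≠ da n y ∨ db n x ≠ db n y ∨ dc n x ≠ dc n y := by
        by_contra hcon
        push_neg at hcon
        apply hdne
        rw [dig_decomp, dig_decomp, hcon.1, hcon.2.1, hcon.2.2]
      -- distance bound on x, y
      have hxylt : |x - y| < (1/25:ℝ)^n := abs_lt_of_floor_eq hfn
      -- lower bound on some coordinate
      have hcoord : ∃ i : Fin 3, (1/5:ℝ)^(n+1)/4 ≤ |e p i - e q i| := by
        rcases hsub with h | h | h
        · refine ⟨0, ?_⟩
          have := key (fun k => da_bounds k x) (fun k => da_bounds k y) (n := n) h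
          simpa [he, hx, hy] using this
        · refine ⟨1, ?_⟩
          have := key (fun k => db_bounds k x) (fun k => db_bounds k y) (n := n) h
          simpa [he, hx, hy] using this
        · refine ⟨2, ?_⟩
          have hne3 : (2 * dc n x + sb p.2 n) ≠ (2 * dc n y + sb q.2 n) := by
            have := dc_bounds n x
            have := dc_bounds n y
            have := hsb01 p.2 n
            have := hsb01 q.2 n
            omega
          have := key (htb p) (htb q) (n := n) hne3
          simpa [he, hx, hy] using this
      obtain ⟨i, hi⟩ := hcoord
      -- norm is at least coordinate difference
      have hnorm : |e p i - e q i| ≤ ‖e p - e q‖ := by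
        have hz : (e p - e q) i = e p i - e q i := rfl
        rw [← hz]
        rw [EuclideanSpace.norm_eq]
        have h1 : |(e p - e q) i| = Real.sqrt (‖(e p - e q) i‖^2) := by
          rw [Real.norm_eq_abs, Real.sqrt_sq (abs_nonneg _)]
        rw [h1]
        apply Real.sqrt_le_sqrt
        exact Finset.single_le_sum (f := fun j => ‖(e p - e q) j‖^2)
          (fun j _ => sq_nonneg _) (Finset.mem_univ i)
      -- final computation
      have hsq : Real.sqrt |(p.1 : ℝ) - (q.1 : ℝ)| ≤ Real.sqrt 2 * (1/5:ℝ)^n := by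
        have habs : |(p.1 : ℝ) - (q.1 : ℝ)| = 2 * |x - y| := by
          have hxy2 : x - y = ((p.1 : ℝ) - (q.1 : ℝ)) / 2 := by
            simp only [hx, hy, hxv]; ring
          rw [hxy2, abs_div, abs_of_pos (show (0:ℝ) < 2 by norm_num)]
          ring
        rw [habs]
        have h1 : 2 * |x - y| ≤ 2 * (1/25:ℝ)^n := by linarith [hxylt]
        calc Real.sqrt (2 * |x - y|) ≤ Real.sqrt (2 * (1/25:ℝ)^n) := Real.sqrt_le_sqrt h1
          _ = Real.sqrt 2 * Real.sqrt ((1/25:ℝ)^n) := Real.sqrt_mul (by norm_num) _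
          _ = Real.sqrt 2 * (1/5:ℝ)^n := by
              congr 1
              have : ((1/5:ℝ)^n)^2 = (1/25:ℝ)^n := by
                rw [← pow_mul, mul_comm, pow_mul]
                norm_num
              rw [← this, Real.sqrt_sq (by positivity)]
      have hsqrt2 : Real.sqrt 2 ≤ 2 := by
        nlinarith [Real.sq_sqrt (by norm_num : (0:ℝ) ≤ 2), Real.sqrt_nonneg 2]
      have hchain : (1/243) * Real.sqrt |(p.1 : ℝ) - (q.1 : ℝ)| ≤ (1/5:ℝ)^(n+1)/4 := by
        have hp5 : (0:ℝ) < (1/5:ℝ)^n := by positivity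
        have h1 : (1/243) * Real.sqrt |(p.1 : ℝ) - (q.1 : ℝ)|
            ≤ (1/243) * (Real.sqrt 2 * (1/5:ℝ)^n) := by
          apply mul_le_mul_of_nonneg_left hsq (by norm_num)
        have h2 : (1/243:ℝ) * (Real.sqrt 2 * (1/5:ℝ)^n) ≤ (1/243) * (2 * (1/5:ℝ)^n) := by
          apply mul_le_mul_of_nonneg_left _ (by norm_num)
          apply mul_le_mul_of_nonneg_right hsqrt2 (le_of_lt hp5)
        have h3 : (1/243:ℝ) * (2 * (1/5:ℝ)^n) ≤ (1/5:ℝ)^(n+1)/4 := by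
          rw [pow_succ]
          nlinarith [hp5]
        linarith
      calc ‖e p - e q‖ ≥ |e p i - e q i| := hnorm
        _ ≥ (1/5:ℝ)^(n+1)/4 := hi
        _ ≥ (1/243) * Real.sqrt |(p.1 : ℝ) - (q.1 : ℝ)| := hchain
end
end

section
/- Let e : [0,1] x D -> [0,1]^3 be (1/243)-close-expanding with respect to the pseudometric d((x,a),(y,b)) = |x-y|, i.e., ||e(p)-e(q)||_2 >= (1/243) sqrt(d(p,q)). Define T = { (x/(2*243^2), e(x, y)) : x in [0,1], y in D } as a subset of R^4 = R x R^3. Then for any two points P = (s, u) and Q = (s', u') in T with s != s', writing epsilon = |s - s'| for the difference of first coordinates and l = ||u - u'||_2, we have l >= sqrt(2 * epsilon); in particular l^2 / 2 >= epsilon. -/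
-- `ℝ⁴` identified with `ℝ × ℝ³`, carrying the Euclidean (`L²`) metric.
abbrev R4 : Type := WithLp 2 (ℝ × EuclideanSpace ℝ (Fin 3))

-- The point of `ℝ⁴` with first coordinate `x` and last three coordinates `u`.
noncomputable def pt (x : ℝ) (u : EuclideanSpace ℝ (Fin 3)) : R4 :=
  (WithLp.equiv 2 (ℝ × EuclideanSpace ℝ (Fin 3))).symm (x, u)

-- The unit cube `[0,1]³`.
def cube : Set (EuclideanSpace ℝ (Fin 3)) := {u | ∀ i, u i ∈ Set.Icc (0:ℝ) 1}

-- The set `T = {(x/(2·243²), e(x,y)) : x ∈ [0,1], y ∈ D} ⊆ ℝ⁴`.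
def T {D : Type*} (e : Set.Icc (0:ℝ) 1 × D → EuclideanSpace ℝ (Fin 3)) : Set R4 :=
  {z | ∃ x : Set.Icc (0:ℝ) 1, ∃ y : D, z = pt ((x : ℝ) / (2 * 243 ^ 2)) (e (x, y))}

theorem stmt_11 {D : Type} (e : Set.Icc (0:ℝ) 1 × D → EuclideanSpace ℝ (Fin 3))
    (he : ∀ p q, ‖e p - e q‖ ≥ (1 / 243) * Real.sqrt |(p.1 : ℝ) - (q.1 : ℝ)|)
    (P Q : R4) (hP : P ∈ T e) (hQ : Q ∈ T e)
    (hne : ((WithLp.equiv 2 _) P).1 ≠ ((WithLp.equiv 2 _) Q).1) :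
    ‖((WithLp.equiv 2 _) P).2 - ((WithLp.equiv 2 _) Q).2‖ ≥
        Real.sqrt (2 * |((WithLp.equiv 2 _) P).1 - ((WithLp.equiv 2 _) Q).1|) ∧
      ‖((WithLp.equiv 2 _) P).2 - ((WithLp.equiv 2 _) Q).2‖ ^ 2 / 2 ≥
        |((WithLp.equiv 2 _) P).1 - ((WithLp.equiv 2 _) Q).1| := by
  obtain ⟨x, y, rfl⟩ := hP
  obtain ⟨x', y', rfl⟩ := hQ
  simp only [pt, Equiv.apply_symm_apply]
  have key : Real.sqrt (2 * |(x:ℝ) / (2 * 243 ^ 2) - (x':ℝ) / (2 * 243 ^ 2)|)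
      = (1 / 243) * Real.sqrt |(x:ℝ) - (x':ℝ)| := by
    rw [div_sub_div_same, abs_div, abs_of_pos (by positivity : (0:ℝ) < 2 * 243 ^ 2),
      show (2 : ℝ) * (|(x:ℝ) - (x':ℝ)| / (2 * 243 ^ 2)) = |(x:ℝ) - (x':ℝ)| / 243 ^ 2 by ring,
      Real.sqrt_div (abs_nonneg _), Real.sqrt_sq (by norm_num : (0:ℝ) ≤ 243)]
    ring
  have h1 : ‖e (x, y) - e (x', y')‖ ≥
      Real.sqrt (2 * |(x:ℝ) / (2 * 243 ^ 2) - (x':ℝ) / (2 * 243 ^ 2)|) := by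
    rw [key]; exact he (x, y) (x', y')
  refine ⟨h1, ?_⟩
  have h2 : Real.sqrt (2 * |(x:ℝ) / (2 * 243 ^ 2) - (x':ℝ) / (2 * 243 ^ 2)|) ^ 2
      = 2 * |(x:ℝ) / (2 * 243 ^ 2) - (x':ℝ) / (2 * 243 ^ 2)| :=
    Real.sq_sqrt (by positivity)
  have h3 := pow_le_pow_left₀ (Real.sqrt_nonneg _) h1 2
  rw [h2] at h3
  linarith
end

section
/- For every a in [1 - 1/(2*243^2), 1], the first homology group H_1(Rips(K, a)) of the Vietoris-Rips complex of the compact set K at scale a is uncountably generated (has rank at least 2^{aleph_0}), where K = closure(T) union {0} x [0,1]^3 union {1} x [0,1]^3 subset of R^4 and T = { (x/(2*243^2), e(x,y)) : x in [0,1], y in D } for the (1/243)-close-expanding injection e : [0,1] x D -> [0,1]^3 with D of cardinality 2^{aleph_0}. -/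
-- Simplicial 1-chains, cycles, boundaries and first homology of an abstract
-- simplicial complex `K` (given as a set of finite sets of vertices), with
-- integer coefficients. Chains are built on ordered tuples of vertices.

-- The boundary map on 1-chains: `(x, y) ↦ y - x`.
noncomputable def bd1 (V : Type*) : ((V × V) →₀ ℤ) →ₗ[ℤ] (V →₀ ℤ) :=
  Finsupp.lsum ℤ fun p => LinearMap.toSpanSingleton ℤ _
    (Finsupp.single p.2 1 - Finsupp.single p.1 1)

-- The boundary map on 2-chains: `(x, y, z) ↦ (y,z) - (x,z) + (x,y)`.
noncomputable def bd2 (V : Type*) : ((V × V × V) →₀ ℤ) →ₗ[ℤ] ((V × V) →₀ ℤ) :=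
  Finsupp.lsum ℤ fun p => LinearMap.toSpanSingleton ℤ _
    (Finsupp.single (p.2.1, p.2.2) 1 - Finsupp.single (p.1, p.2.2) 1
      + Finsupp.single (p.1, p.2.1) 1)

-- 1-chains supported on the edges (1-simplexes) of the complex `K`.
open Classical in
noncomputable def oneChains {V : Type*} (K : Set (Finset V)) :
    Submodule ℤ ((V × V) →₀ ℤ) where
  carrier := {c | ∀ p ∈ c.support, p.1 ≠ p.2 ∧ ({p.1, p.2} : Finset V) ∈ K}
  add_mem' := by
    intro a b ha hb p hp
    rcases Finset.mem_union.1 (Finsupp.support_add hp) with h | h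
    · exact ha p h
    · exact hb p h
  zero_mem' := by intro p hp; simp at hp
  smul_mem' := by
    intro z c hc p hp
    exact hc p (Finsupp.support_smul hp)

-- 2-chains supported on the triangles (2-simplexes) of the complex `K`.
open Classical in
noncomputable def twoChains {V : Type*} (K : Set (Finset V)) :
    Submodule ℤ ((V × V × V) →₀ ℤ) where
  carrier := {c | ∀ p ∈ c.support,
    ({p.1, p.2.1, p.2.2} : Finset V).card = 3 ∧ ({p.1, p.2.1, p.2.2} : Finset V) ∈ K}
  add_mem' := by
    intro a b ha hb p hp
    rcases Finset.mem_union.1 (Finsupp.support_add hp) with h | h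
    · exact ha p h
    · exact hb p h
  zero_mem' := by intro p hp; simp at hp
  smul_mem' := by
    intro z c hc p hp
    exact hc p (Finsupp.support_smul hp)

-- 1-cycles of `K`: 1-chains of `K` with vanishing boundary.
noncomputable def cyclesOne {V : Type*} (K : Set (Finset V)) :
    Submodule ℤ ((V × V) →₀ ℤ) :=
  oneChains K ⊓ LinearMap.ker (bd1 V)

-- 1-boundaries of `K`: boundaries of 2-chains of `K`.
noncomputable def boundariesOne {V : Type*} (K : Set (Finset V)) :
    Submodule ℤ ((V × V) →₀ ℤ) :=
  Submodule.map (bd2 V) (twoChains K)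

-- The first simplicial homology of `K` with integer coefficients:
-- 1-cycles modulo 1-boundaries.
noncomputable def simplicialH1 {V : Type*} (K : Set (Finset V)) : Type _ :=
  (cyclesOne K) ⧸ (Submodule.comap (cyclesOne K).subtype (boundariesOne K))

noncomputable instance {V : Type*} (K : Set (Finset V)) :
    AddCommGroup (simplicialH1 K) :=
  inferInstanceAs (AddCommGroup ((cyclesOne K) ⧸
    (Submodule.comap (cyclesOne K).subtype (boundariesOne K))))

noncomputable instance {V : Type*} (K : Set (Finset V)) :
    Module ℤ (simplicialH1 K) :=
  inferInstanceAs (Module ℤ ((cyclesOne K) ⧸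
    (Submodule.comap (cyclesOne K).subtype (boundariesOne K))))

-- The Vietoris–Rips complex of a pseudometric space `M` at scale `a`: its
-- `k`-simplexes are the `(k+1)`-element subsets of `M` of diameter at most `a`.
def ripsComplex (M : Type*) [PseudoMetricSpace M] (a : ℝ) : Set (Finset M) :=
  {s | s.Nonempty ∧ ∀ x ∈ s, ∀ y ∈ s, dist x y ≤ a}


open Set Real

local notation "E3" => EuclideanSpace ℝ (Fin 3)

lemma pt_inj {s t : ℝ} {u v : E3} : pt s u = pt t v ↔ s = t ∧ u = v := by
  constructor
  · intro h
    have h' := congrArg (WithLp.equiv 2 (ℝ × E3)) h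
    simpa [pt, Prod.ext_iff] using h'
  · rintro ⟨rfl, rfl⟩; rfl

lemma dist_pt (s t : ℝ) (u v : E3) :
    dist (pt s u) (pt t v) = Real.sqrt ((s - t)^2 + (dist u v)^2) := by
  rw [WithLp.prod_dist_eq_of_L2]
  have h1 : (pt s u).fst = s := rfl
  have h2 : (pt t v).fst = t := rfl
  have h3 : (pt s u).snd = u := rfl
  have h4 : (pt t v).snd = v := rfl
  rw [h1, h2, h3, h4, Real.dist_eq, sq_abs]

lemma sqrt_le_of_sq {X a : ℝ} (ha : 0 ≤ a) (h : X ≤ a^2) : Real.sqrt X ≤ a := by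
  calc Real.sqrt X ≤ Real.sqrt (a^2) := Real.sqrt_le_sqrt h
  _ = a := Real.sqrt_sq ha

lemma sq_le_of_sqrt_le {X a : ℝ} (hX : 0 ≤ X) (h : Real.sqrt X ≤ a) : X ≤ a^2 := by
  have := pow_le_pow_left₀ (Real.sqrt_nonneg X) h 2
  rwa [Real.sq_sqrt hX] at this

lemma dist_pt_le {s t : ℝ} {u v : E3} {a : ℝ} (ha : 0 ≤ a)
    (h : (s - t)^2 + dist u v^2 ≤ a^2) : dist (pt s u) (pt t v) ≤ a := by
  rw [dist_pt]; exact sqrt_le_of_sq ha h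

lemma sq_dist_pt_le {s t : ℝ} {u v : E3} {a : ℝ}
    (h : dist (pt s u) (pt t v) ≤ a) : (s - t)^2 + dist u v^2 ≤ a^2 := by
  rw [dist_pt] at h
  exact sq_le_of_sqrt_le (by positivity) h

lemma abs_fst_le_dist_pt {s t : ℝ} {u v : E3} : |s - t| ≤ dist (pt s u) (pt t v) := by
  rw [dist_pt, ← Real.sqrt_sq_eq_abs]
  apply Real.sqrt_le_sqrt
  nlinarith [sq_nonneg (dist u v)]

lemma dist_snd_le_dist_pt {s t : ℝ} {u v : E3} : dist u v ≤ dist (pt s u) (pt t v) := by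
  rw [dist_pt]
  have h := Real.sqrt_le_sqrt (show (dist u v)^2 ≤ (s-t)^2 + dist u v^2 by nlinarith [sq_nonneg (s - t)])
  rwa [Real.sqrt_sq dist_nonneg] at h

lemma cube_dist_le {u v : E3} (hu : u ∈ cube) (hv : v ∈ cube) : dist u v ≤ 2 := by
  rw [EuclideanSpace.dist_eq]
  apply sqrt_le_of_sq (by norm_num)
  rw [Fin.sum_univ_three]
  have h0u := hu 0; have h1u := hu 1; have h2u := hu 2
  have h0v := hv 0; have h1v := hv 1; have h2v := hv 2
  simp only [Set.mem_Icc] at h0u h1u h2u h0v h1v h2v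
  simp only [Real.dist_eq]
  rw [sq_abs, sq_abs, sq_abs]
  nlinarith [h0u.1, h0u.2, h0v.1, h0v.2, h1u.1, h1u.2, h1v.1, h1v.2, h2u.1, h2u.2, h2v.1, h2v.2]

lemma lin_mem_cube {u v : E3} (hu : u ∈ cube) (hv : v ∈ cube) {c : ℝ} (h0 : 0 ≤ c) (h1 : c ≤ 1) :
    u + c • (v - u) ∈ cube := by
  intro i
  have hui := hu i; have hvi := hv i
  simp only [Set.mem_Icc] at hui hvi ⊢
  have : (u + c • (v - u)) i = u i + c * (v i - u i) := by
    simp [PiLp.add_apply, PiLp.smul_apply, PiLp.sub_apply, smul_eq_mul]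
  rw [this]
  constructor <;> nlinarith [hui.1, hui.2, hvi.1, hvi.2]

lemma lin_sub {u v : E3} (c c' : ℝ) :
    (u + c • (v - u)) - (u + c' • (v - u)) = (c - c') • (v - u) := by
  rw [sub_smul]; abel

lemma dist_lin {u v : E3} (c c' : ℝ) :
    dist (u + c • (v - u)) (u + c' • (v - u)) = |c - c'| * ‖v - u‖ := by
  rw [dist_eq_norm, lin_sub, norm_smul, Real.norm_eq_abs]

lemma lin_ne {u v : E3} (hne : u ≠ v) {c c' : ℝ} (hcc : c ≠ c') :
    u + c • (v - u) ≠ u + c' • (v - u) := by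
  intro h
  have h2 : (c - c') • (v - u) = 0 := by rw [← lin_sub c c', h, sub_self]
  rcases smul_eq_zero.1 h2 with h3 | h3
  · exact hcc (by linarith [sub_eq_zero.1 h3])
  · exact hne (sub_eq_zero.1 h3).symm

lemma lin_zero (u v : E3) : u + (0:ℝ) • (v - u) = u := by rw [zero_smul, add_zero]
lemma lin_one (u v : E3) : u + (1:ℝ) • (v - u) = v := by rw [one_smul]; abel

lemma closure_T_struct {D : Type} (e : Set.Icc (0:ℝ) 1 × D → E3)
    (he : ∀ p q, ‖e p - e q‖ ≥ (1 / 243) * Real.sqrt |(p.1 : ℝ) - (q.1 : ℝ)|)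
    {z : R4} (hz : z ∈ closure (T e)) :
    ∃ x : ℝ, x ∈ Set.Icc (0:ℝ) 1 ∧ ∃ c : E3, z = pt (x / (2 * 243 ^ 2)) c ∧
      ∀ p : Set.Icc (0:ℝ) 1 × D, (1 / 243) * Real.sqrt |x - (p.1 : ℝ)| ≤ dist c (e p) := by
  obtain ⟨f, hfT, hfz⟩ := mem_closure_iff_seq_limit.1 hz
  choose xs ys hf using hfT
  set ζ1 : ℝ := (WithLp.equiv 2 (ℝ × E3) z).1 with hζ1
  set ζ2 : E3 := (WithLp.equiv 2 (ℝ × E3) z).2 with hζ2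
  have hzeta : z = pt ζ1 ζ2 := by
    rw [hζ1, hζ2]; unfold pt; rw [← Prod.mk.eta (p := WithLp.equiv 2 (ℝ × E3) z)]
    exact ((WithLp.equiv 2 (ℝ × E3)).symm_apply_apply z).symm
  have hdist : Filter.Tendsto (fun n => dist (f n) z) Filter.atTop (nhds 0) :=
    tendsto_iff_dist_tendsto_zero.1 hfz
  have hb1 : ∀ n, |(fun n => (xs n : ℝ)/(2*243^2) - ζ1) n| ≤ dist (f n) z := by
    intro n
    rw [hf n, hzeta]
    exact abs_fst_le_dist_pt
  have h1 : Filter.Tendsto (fun n => (xs n : ℝ)/(2*243^2) - ζ1) Filter.atTop (nhds 0) := by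
    apply squeeze_zero_norm _ hdist
    intro n; rw [Real.norm_eq_abs]; exact hb1 n
  have h2 : Filter.Tendsto (fun n => (xs n : ℝ)/(2*243^2)) Filter.atTop (nhds ζ1) :=
    tendsto_sub_nhds_zero_iff.1 h1
  have hx : Filter.Tendsto (fun n => (xs n : ℝ)) Filter.atTop (nhds (ζ1 * (2*243^2))) := by
    have h3 := h2.mul_const ((2:ℝ)*243^2)
    refine h3.congr (fun n => ?_)
    field_simp
  set x : ℝ := ζ1 * (2*243^2) with hxdef
  have hxIcc : x ∈ Set.Icc (0:ℝ) 1 :=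
    isClosed_Icc.mem_of_tendsto hx (Filter.Eventually.of_forall (fun n => (xs n).2))
  have hxζ : x / (2*243^2) = ζ1 := by rw [hxdef]; field_simp
  have hb2 : ∀ n, dist (e (xs n, ys n)) ζ2 ≤ dist (f n) z := by
    intro n; rw [hf n, hzeta]; exact dist_snd_le_dist_pt
  have hsnd : Filter.Tendsto (fun n => e (xs n, ys n)) Filter.atTop (nhds ζ2) := by
    apply tendsto_iff_dist_tendsto_zero.2
    exact squeeze_zero (fun n => dist_nonneg) hb2 hdist
  refine ⟨x, hxIcc, ζ2, by rw [hxζ]; exact hzeta, ?_⟩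
  intro p
  have hA : Filter.Tendsto (fun n => (1/243 : ℝ) * Real.sqrt |(xs n : ℝ) - (p.1 : ℝ)|)
      Filter.atTop (nhds ((1/243) * Real.sqrt |x - (p.1 : ℝ)|)) := by
    apply Filter.Tendsto.const_mul
    exact (Real.continuous_sqrt.tendsto _).comp ((continuous_abs.tendsto _).comp (hx.sub_const _))
  have hB : Filter.Tendsto (fun n => dist (e (xs n, ys n)) (e p)) Filter.atTop
      (nhds (dist ζ2 (e p))) := hsnd.dist tendsto_const_nhds
  refine le_of_tendsto_of_tendsto' hA hB (fun n => ?_)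
  rw [dist_eq_norm]
  exact he (xs n, ys n) p

lemma sq_eq_zero_of_le {d : ℝ} (h0 : 0 ≤ d) (h : d^2 ≤ 0) : d = 0 := by
  nlinarith

set_option maxHeartbeats 1600000 in
lemma no_triangle {D : Type} (e : Set.Icc (0:ℝ) 1 × D → E3)
    (he : ∀ p q, ‖e p - e q‖ ≥ (1 / 243) * Real.sqrt |(p.1 : ℝ) - (q.1 : ℝ)|)
    {a : ℝ} (ha : a ∈ Set.Icc (1 - 1/(2*243^2)) 1)
    {x₀ : Set.Icc (0:ℝ) 1} (hx₀ : (x₀ : ℝ) = (1-a)*(2*243^2))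
    (y : D)
    {A B : ↥(closure (T e) ∪ pt 0 '' cube ∪ pt 1 '' cube)}
    (hAv : (A : R4) = pt ((x₀:ℝ)/(2*243^2)) (e (x₀, y)))
    (hBv : (B : R4) = pt 1 (e (x₀, y)))
    {t : Finset ↥(closure (T e) ∪ pt 0 '' cube ∪ pt 1 '' cube)}
    (ht : t ∈ ripsComplex (↥(closure (T e) ∪ pt 0 '' cube ∪ pt 1 '' cube)) a)
    (hcard : t.card = 3) (hAt : A ∈ t) (hBt : B ∈ t) : False := by
  classical
  have ha1 : 1 - 1/(2*243^2) ≤ a := ha.1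
  have ha2 : a ≤ 1 := ha.2
  have hx₀0 : (0:ℝ) ≤ (x₀:ℝ) := x₀.2.1
  have hx₀1 : (x₀:ℝ) ≤ 1 := x₀.2.2
  have hkey : a = 1 - (x₀:ℝ)/(2*243^2) := by rw [hx₀]; field_simp; ring
  have ha0 : (0:ℝ) ≤ a := by linarith
  set u : E3 := e (x₀, y) with hu
  have hANB : A ≠ B := by
    intro h
    have h2 : (A : R4) = (B : R4) := by rw [h]
    rw [hAv, hBv] at h2
    have h3 := (pt_inj.1 h2).1
    linarith
  have hthird : ∃ m ∈ t, m ≠ A ∧ m ≠ B := by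
    by_contra hcon
    push_neg at hcon
    have hsub : t ⊆ {A, B} := by
      intro m hm
      rcases eq_or_ne m A with h | h
      · simp [h]
      · simp [hcon m hm h]
    have h2 : t.card ≤ ({A, B} : Finset _).card := Finset.card_le_card hsub
    have h3 : ({A, B} : Finset _).card ≤ 2 := by
      apply le_trans (Finset.card_insert_le _ _); simp
    omega
  obtain ⟨m, hmt, hmA, hmB⟩ := hthird
  have hdmA : dist (m : R4) (A : R4) ≤ a := by
    have := ht.2 m hmt A hAt; rwa [Subtype.dist_eq] at this
  have hdmB : dist (m : R4) (B : R4) ≤ a := by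
    have := ht.2 m hmt B hBt; rwa [Subtype.dist_eq] at this
  rcases m.2 with (hm | hm) | hm
  · -- closure T case
    obtain ⟨x, hxI, c, hmval, hsep⟩ := closure_T_struct e he hm
    rw [hmval, hBv] at hdmB
    have hsq := sq_dist_pt_le hdmB
    rw [hkey] at hsq
    have hsep' := hsep (x₀, y)
    rcases lt_trichotomy x (x₀:ℝ) with hlt | heq | hgt
    · nlinarith [sq_nonneg (dist c u),
        mul_pos (show (0:ℝ) < ((x₀:ℝ)/(2*243^2) - x/(2*243^2)) by linarith)
          (show (0:ℝ) < (1 - x/(2*243^2)) + (1 - (x₀:ℝ)/(2*243^2)) by linarith [hxI.2])]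
    · have hd2 : dist c u ^ 2 ≤ 0 := by rw [heq] at hsq; nlinarith
      have hd0 : c = u := dist_eq_zero.1 (sq_eq_zero_of_le dist_nonneg hd2)
      exact hmA (Subtype.ext (by rw [hmval, hAv, heq, hd0]))
    · have habs : |x - (x₀:ℝ)| = x - (x₀:ℝ) := abs_of_pos (by linarith)
      rw [habs] at hsep'
      have h0 : (0:ℝ) ≤ (1/243) * Real.sqrt (x - (x₀:ℝ)) := by positivity
      have hmul := mul_self_le_mul_self h0 hsep'
      have hss : Real.sqrt (x - (x₀:ℝ)) * Real.sqrt (x - (x₀:ℝ)) = x - (x₀:ℝ) :=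
        Real.mul_self_sqrt (by linarith)
      have hsq2 : (1/(2*243^2):ℝ) * (2 * (x - (x₀:ℝ))) ≤ dist c u ^ 2 := by
        have hexp : ((1:ℝ)/243 * Real.sqrt (x - (x₀:ℝ))) * ((1:ℝ)/243 * Real.sqrt (x - (x₀:ℝ)))
            = (1/243:ℝ)*(1/243) * (Real.sqrt (x - (x₀:ℝ)) * Real.sqrt (x - (x₀:ℝ))) := by ring
        rw [hexp, hss] at hmul
        nlinarith [hmul]
      have hP : (0:ℝ) < (x - (x₀:ℝ)) * (x + (x₀:ℝ)) :=
        mul_pos (by linarith) (by linarith)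
      linarith [hsq, hsq2, hP]
  · -- bottom cube case
    obtain ⟨v, hvc, hmval⟩ := hm
    rw [← hmval, hBv] at hdmB
    have hsq := sq_dist_pt_le hdmB
    have h1a : (1-a)*(1-a) ≤ (1-a)*1 := mul_le_mul_of_nonneg_left (by linarith) (by linarith)
    have hd2 : dist v u ^ 2 ≤ 0 := by linarith [hsq, h1a]
    have ha1' : a = 1 := by linarith [hsq, sq_nonneg (dist v u), h1a]
    have hx₀z : (x₀:ℝ) = 0 := by rw [hx₀, ha1']; ring
    apply hmA
    apply Subtype.ext
    rw [← hmval, hAv, hx₀z, dist_eq_zero.1 (sq_eq_zero_of_le dist_nonneg hd2)]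
    norm_num
  · -- top cube case
    obtain ⟨v, hvc, hmval⟩ := hm
    rw [← hmval, hAv] at hdmA
    have hsq := sq_dist_pt_le hdmA
    rw [hkey] at hsq
    have hd2 : dist v u ^ 2 ≤ 0 := by linarith [hsq]
    apply hmB
    apply Subtype.ext
    rw [← hmval, hBv, dist_eq_zero.1 (sq_eq_zero_of_le dist_nonneg hd2)]

lemma rank_ge_of_dual {V : Type} (K : Set (Finset V)) {ι : Type} [DecidableEq ι]
    (σ : ι → (cyclesOne K))
    (P Q : ι → (V × V))
    (hkill : ∀ j, ∀ x ∈ boundariesOne K, x (P j) - x (Q j) = (0:ℤ))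
    (hdual : ∀ j i, ((σ i : (V × V) →₀ ℤ) (P j) - ((σ i : (V × V) →₀ ℤ)) (Q j))
      = if i = j then 1 else 0) :
    Cardinal.mk ι ≤ Module.rank ℤ (simplicialH1 K) := by
  set N := Submodule.comap (cyclesOne K).subtype (boundariesOne K) with hN
  have hli : LinearIndependent ℤ (fun i : ι => (Submodule.mkQ N) (σ i)) := by
    rw [linearIndependent_iff]
    intro l hl
    ext j
    rw [Finsupp.linearCombination_apply] at hl
    have hl2 : (Submodule.mkQ N) (l.sum fun i a => a • σ i) = 0 := by
      rw [map_finsuppSum]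
      simpa using hl
    have hmem : (l.sum fun i a => a • σ i) ∈ N := by
      rwa [← Submodule.Quotient.mk_eq_zero, ← Submodule.mkQ_apply]
    have hmem2 : ((cyclesOne K).subtype) (l.sum fun i a => a • σ i) ∈ boundariesOne K :=
      Submodule.mem_comap.1 hmem
    have hval : ((cyclesOne K).subtype) (l.sum fun i a => a • σ i)
        = l.sum fun i a => a • (σ i : (V × V) →₀ ℤ) := by
      rw [map_finsuppSum]
      rfl
    rw [hval] at hmem2
    have h0 := hkill j _ hmem2
    rw [Finsupp.sum_apply, Finsupp.sum_apply, ← Finsupp.sum_sub] at h0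
    have h1 : (l.sum fun i a => ((a • (σ i : (V × V) →₀ ℤ)) (P j)
        - (a • (σ i : (V × V) →₀ ℤ)) (Q j))) = l.sum fun i a => if i = j then a else 0 := by
      apply Finsupp.sum_congr
      intro i _
      rw [Finsupp.smul_apply, Finsupp.smul_apply, smul_eq_mul, smul_eq_mul, ← mul_sub, hdual j i]
      by_cases h : i = j <;> simp [h]
    rw [h1, Finsupp.sum_ite_self_eq'] at h0
    exact h0
  exact hli.cardinal_le_rank

abbrev Vt {D : Type} (e : Set.Icc (0:ℝ) 1 × D → E3) : Type :=
  ↥(closure (T e) ∪ pt 0 '' cube ∪ pt 1 '' cube)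

def ic1 : Set.Icc (0:ℝ) 1 := ⟨1, by norm_num⟩

noncomputable def vT {D : Type} (e : Set.Icc (0:ℝ) 1 × D → E3)
    (x : Set.Icc (0:ℝ) 1) (y : D) : Vt e :=
  ⟨pt ((x:ℝ)/(2*243^2)) (e (x,y)), Or.inl (Or.inl (subset_closure ⟨x, y, rfl⟩))⟩

noncomputable def v0 {D : Type} (e : Set.Icc (0:ℝ) 1 × D → E3)
    (u : E3) (hu : u ∈ cube) : Vt e :=
  ⟨pt 0 u, Or.inl (Or.inr ⟨u, hu, rfl⟩)⟩

noncomputable def v1 {D : Type} (e : Set.Icc (0:ℝ) 1 × D → E3)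
    (u : E3) (hu : u ∈ cube) : Vt e :=
  ⟨pt 1 u, Or.inr ⟨u, hu, rfl⟩⟩

noncomputable def W {D : Type} (e : Set.Icc (0:ℝ) 1 × D → E3)
    (hrange : ∀ p, ∀ i, e p i ∈ Set.Icc (0:ℝ) 1)
    (x₀ : Set.Icc (0:ℝ) 1) (y b : D) : ℕ → Vt e
  | 1 => v1 e (e (x₀,y)) (hrange _)
  | 2 => v1 e (e (x₀,y) + (1/4:ℝ) • (e (ic1,b) - e (x₀,y)))
      (lin_mem_cube (hrange _) (hrange _) (by norm_num) (by norm_num))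
  | 3 => v1 e (e (x₀,y) + (2/4:ℝ) • (e (ic1,b) - e (x₀,y)))
      (lin_mem_cube (hrange _) (hrange _) (by norm_num) (by norm_num))
  | 4 => v1 e (e (x₀,y) + (3/4:ℝ) • (e (ic1,b) - e (x₀,y)))
      (lin_mem_cube (hrange _) (hrange _) (by norm_num) (by norm_num))
  | 5 => v1 e (e (ic1,b)) (hrange _)
  | 6 => vT e ic1 b
  | 7 => v0 e (e (ic1,b)) (hrange _)
  | 8 => v0 e (e (x₀,y) + (3/4:ℝ) • (e (ic1,b) - e (x₀,y)))
      (lin_mem_cube (hrange _) (hrange _) (by norm_num) (by norm_num))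
  | 9 => v0 e (e (x₀,y) + (2/4:ℝ) • (e (ic1,b) - e (x₀,y)))
      (lin_mem_cube (hrange _) (hrange _) (by norm_num) (by norm_num))
  | 10 => v0 e (e (x₀,y) + (1/4:ℝ) • (e (ic1,b) - e (x₀,y)))
      (lin_mem_cube (hrange _) (hrange _) (by norm_num) (by norm_num))
  | 11 => v0 e (e (x₀,y)) (hrange _)
  | _ => vT e x₀ y

open Classical in
noncomputable def chainOf {V : Type} (w : ℕ → V) : (V × V) →₀ ℤ :=
  Finsupp.single (w 0, w 1) 1 + Finsupp.single (w 1, w 2) 1 + Finsupp.single (w 2, w 3) 1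
  + Finsupp.single (w 3, w 4) 1 + Finsupp.single (w 4, w 5) 1 + Finsupp.single (w 5, w 6) 1
  + Finsupp.single (w 6, w 7) 1 + Finsupp.single (w 7, w 8) 1 + Finsupp.single (w 8, w 9) 1
  + Finsupp.single (w 9, w 10) 1 + Finsupp.single (w 10, w 11) 1
  + (if w 11 = w 0 then 0 else Finsupp.single (w 11, w 0) 1)

lemma bd1_single {V : Type} (p : V × V) :
    bd1 V (Finsupp.single p 1) = Finsupp.single p.2 1 - Finsupp.single p.1 1 := by
  simp [bd1, Finsupp.lsum_single, LinearMap.toSpanSingleton_apply]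

lemma bd1_chainOf {V : Type} (w : ℕ → V) : bd1 V (chainOf w) = 0 := by
  classical
  unfold chainOf
  by_cases h : w 11 = w 0
  · rw [if_pos h]
    simp only [map_add, map_zero, bd1_single, h]
    abel
  · rw [if_neg h]
    simp only [map_add, bd1_single]
    abel

open Classical in
lemma single_mem_oneChains {V : Type} {K : Set (Finset V)} {p : V × V}
    (hne : p.1 ≠ p.2) (hK : ({p.1, p.2} : Finset V) ∈ K) :
    Finsupp.single p (1:ℤ) ∈ oneChains K := by
  intro q hq
  classical
  rw [Finsupp.support_single_ne_zero p one_ne_zero] at hq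
  rcases Finset.mem_singleton.1 hq with rfl
  exact ⟨hne, hK⟩

open Classical in
lemma chainOf_mem_oneChains {V : Type} {K : Set (Finset V)} {w : ℕ → V}
    (hp : ∀ i < 11, w i ≠ w (i+1) ∧ ({w i, w (i+1)} : Finset V) ∈ K)
    (hlast : w 11 ≠ w 0 → ({w 11, w 0} : Finset V) ∈ K) :
    chainOf w ∈ oneChains K := by
  classical
  unfold chainOf
  refine Submodule.add_mem _ ?_ ?_
  · refine Submodule.add_mem _ (Submodule.add_mem _ (Submodule.add_mem _ (Submodule.add_mem _
      (Submodule.add_mem _ (Submodule.add_mem _ (Submodule.add_mem _ (Submodule.add_mem _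
      (Submodule.add_mem _ (Submodule.add_mem _ ?_ ?_) ?_) ?_) ?_) ?_) ?_) ?_) ?_) ?_) ?_
    · exact single_mem_oneChains (hp 0 (by norm_num)).1 (hp 0 (by norm_num)).2
    · exact single_mem_oneChains (hp 1 (by norm_num)).1 (hp 1 (by norm_num)).2
    · exact single_mem_oneChains (hp 2 (by norm_num)).1 (hp 2 (by norm_num)).2
    · exact single_mem_oneChains (hp 3 (by norm_num)).1 (hp 3 (by norm_num)).2
    · exact single_mem_oneChains (hp 4 (by norm_num)).1 (hp 4 (by norm_num)).2
    · exact single_mem_oneChains (hp 5 (by norm_num)).1 (hp 5 (by norm_num)).2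
    · exact single_mem_oneChains (hp 6 (by norm_num)).1 (hp 6 (by norm_num)).2
    · exact single_mem_oneChains (hp 7 (by norm_num)).1 (hp 7 (by norm_num)).2
    · exact single_mem_oneChains (hp 8 (by norm_num)).1 (hp 8 (by norm_num)).2
    · exact single_mem_oneChains (hp 9 (by norm_num)).1 (hp 9 (by norm_num)).2
    · exact single_mem_oneChains (hp 10 (by norm_num)).1 (hp 10 (by norm_num)).2
  · split_ifs with h
    · exact Submodule.zero_mem _
    · exact single_mem_oneChains h (hlast h)

lemma ic1_coe : ((ic1 : Set.Icc (0:ℝ) 1) : ℝ) = 1 := rfl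

open Classical in
lemma edge_mem {Vty : Type} [PseudoMetricSpace Vty] {a : ℝ} (h0 : 0 ≤ a) {p q : Vty}
    (hd : dist p q ≤ a) : ({p, q} : Finset Vty) ∈ ripsComplex Vty a := by
  refine ⟨⟨p, by simp⟩, ?_⟩
  intro x hx y hy
  rcases Finset.mem_insert.1 hx with rfl | hx'
  · rcases Finset.mem_insert.1 hy with rfl | hy'
    · simpa using h0
    · rcases Finset.mem_singleton.1 hy' with rfl; exact hd
  · rcases Finset.mem_singleton.1 hx' with rfl
    rcases Finset.mem_insert.1 hy with rfl | hy'
    · rw [dist_comm]; exact hd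
    · rcases Finset.mem_singleton.1 hy' with rfl; simpa using h0

lemma dist_lin0 (u v : E3) (c : ℝ) : dist u (u + c • (v - u)) = |c| * ‖v - u‖ := by
  rw [dist_eq_norm, show u - (u + c • (v - u)) = -(c • (v - u)) by abel, norm_neg, norm_smul,
    Real.norm_eq_abs]

lemma dist_lin1 (u v : E3) (c : ℝ) : dist (u + c • (v - u)) v = |c - 1| * ‖v - u‖ := by
  rw [dist_eq_norm, show (u + c • (v - u)) - v = (c - 1) • (v - u) by rw [sub_smul, one_smul]; abel,
    norm_smul, Real.norm_eq_abs]

lemma lin_ne0 {u v : E3} (hune : u ≠ v) {c : ℝ} (hc : c ≠ 0) : u ≠ u + c • (v - u) := by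
  intro h
  rcases smul_eq_zero.1 (left_eq_add.1 h) with h3 | h3
  · exact hc h3
  · exact hune (sub_eq_zero.1 h3).symm

lemma lin_ne1 {u v : E3} (hune : u ≠ v) {c : ℝ} (hc : c ≠ 1) : u + c • (v - u) ≠ v := by
  intro h
  have h2 : (c - 1) • (v - u) = (u + c • (v - u)) - v := by
    rw [sub_smul, one_smul]; abel
  rw [h, sub_self] at h2
  rcases smul_eq_zero.1 h2 with h3 | h3
  · exact hc (by linarith [sub_eq_zero.1 h3])
  · exact hune (sub_eq_zero.1 h3).symm

set_option maxHeartbeats 2000000 in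
open Classical in
lemma chain_mem_cycles {D : Type} (e : Set.Icc (0:ℝ) 1 × D → E3)
    (hrange : ∀ p, ∀ i, e p i ∈ Set.Icc (0:ℝ) 1) (hinj : Function.Injective e)
    {a : ℝ} (ha : a ∈ Set.Icc (1 - 1/(2*243^2)) 1)
    {x₀ : Set.Icc (0:ℝ) 1} (hx₀ : (x₀ : ℝ) = (1-a)*(2*243^2))
    {y b : D} (hyb : y ≠ b) :
    chainOf (W e hrange x₀ y b) ∈ cyclesOne (ripsComplex (Vt e) a) := by
  have ha1 : 1 - 1/(2*243^2) ≤ a := ha.1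
  have ha2 : a ≤ 1 := ha.2
  have hx₀0 : (0:ℝ) ≤ (x₀:ℝ) := x₀.2.1
  have hx₀1 : (x₀:ℝ) ≤ 1 := x₀.2.2
  have hkey : a = 1 - (x₀:ℝ)/(2*243^2) := by rw [hx₀]; field_simp; ring
  have ha0 : (0:ℝ) ≤ a := by linarith
  have ha05 : (1/2:ℝ) ≤ a := by linarith
  have hune : e (x₀, y) ≠ e (ic1, b) := by
    intro h
    exact hyb (congrArg Prod.snd (hinj h))
  have hvu2 : ‖e (ic1, b) - e (x₀, y)‖ ≤ 2 := by
    rw [← dist_eq_norm, dist_comm]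
    exact cube_dist_le (hrange _) (hrange _)
  have hvu0 : (0:ℝ) ≤ ‖e (ic1, b) - e (x₀, y)‖ := norm_nonneg _
  have hsq4 : (‖e (ic1, b) - e (x₀, y)‖)^2 ≤ 4 := by nlinarith
  have hsqa : (1/2:ℝ)^2 ≤ a^2 := by nlinarith
  refine Submodule.mem_inf.2 ⟨chainOf_mem_oneChains ?_ ?_, LinearMap.mem_ker.2 (bd1_chainOf _)⟩
  · intro i hi
    interval_cases i
    · -- 0 : W0 -> W1
      constructor
      · intro hcon
        have h2 : (x₀:ℝ)/(2*243^2) = 1 := (pt_inj.1 (Subtype.ext_iff.1 hcon)).1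
        have h3 : (x₀:ℝ) = 2*243^2 := by field_simp at h2; linarith
        linarith
      · refine edge_mem ha0 ?_
        rw [Subtype.dist_eq]
        refine dist_pt_le ha0 ?_
        rw [dist_self, hkey]
        nlinarith
    · -- 1 : W1 -> W2
      constructor
      · intro hcon
        have h2 : e (x₀,y) = e (x₀,y) + (1/4:ℝ) • (e (ic1,b) - e (x₀,y)) :=
          (pt_inj.1 (Subtype.ext_iff.1 hcon)).2
        exact lin_ne0 hune (by norm_num) h2
      · refine edge_mem ha0 ?_
        rw [Subtype.dist_eq]
        refine dist_pt_le ha0 ?_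
        rw [dist_lin0, show |(1/4:ℝ)| = 1/4 from by norm_num]
        nlinarith
    · -- 2 : W2 -> W3
      constructor
      · intro hcon
        have h2 : e (x₀,y) + (1/4:ℝ) • (e (ic1,b) - e (x₀,y))
            = e (x₀,y) + (2/4:ℝ) • (e (ic1,b) - e (x₀,y)) :=
          (pt_inj.1 (Subtype.ext_iff.1 hcon)).2
        exact lin_ne hune (by norm_num) h2
      · refine edge_mem ha0 ?_
        rw [Subtype.dist_eq]
        refine dist_pt_le ha0 ?_
        rw [dist_lin, show |(1/4:ℝ) - 2/4| = 1/4 from by norm_num]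
        nlinarith
    · -- 3 : W3 -> W4
      constructor
      · intro hcon
        have h2 : e (x₀,y) + (2/4:ℝ) • (e (ic1,b) - e (x₀,y))
            = e (x₀,y) + (3/4:ℝ) • (e (ic1,b) - e (x₀,y)) :=
          (pt_inj.1 (Subtype.ext_iff.1 hcon)).2
        exact lin_ne hune (by norm_num) h2
      · refine edge_mem ha0 ?_
        rw [Subtype.dist_eq]
        refine dist_pt_le ha0 ?_
        rw [dist_lin, show |(2/4:ℝ) - 3/4| = 1/4 from by norm_num]
        nlinarith
    · -- 4 : W4 -> W5
      constructor
      · intro hcon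
        have h2 : e (x₀,y) + (3/4:ℝ) • (e (ic1,b) - e (x₀,y)) = e (ic1,b) :=
          (pt_inj.1 (Subtype.ext_iff.1 hcon)).2
        exact lin_ne1 hune (by norm_num) h2
      · refine edge_mem ha0 ?_
        rw [Subtype.dist_eq]
        refine dist_pt_le ha0 ?_
        rw [dist_lin1, show |(3/4:ℝ) - 1| = 1/4 from by norm_num]
        nlinarith
    · -- 5 : W5 -> W6
      constructor
      · intro hcon
        have h2 : (1:ℝ) = (1:ℝ)/(2*243^2) := (pt_inj.1 (Subtype.ext_iff.1 hcon)).1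
        norm_num at h2
      · refine edge_mem ha0 ?_
        rw [Subtype.dist_eq]
        refine dist_pt_le ha0 ?_
        rw [dist_self, ic1_coe]
        nlinarith
    · -- 6 : W6 -> W7
      constructor
      · intro hcon
        have h2 : (1:ℝ)/(2*243^2) = 0 := (pt_inj.1 (Subtype.ext_iff.1 hcon)).1
        norm_num at h2
      · refine edge_mem ha0 ?_
        rw [Subtype.dist_eq]
        refine dist_pt_le ha0 ?_
        rw [dist_self, ic1_coe]
        nlinarith
    · -- 7 : W7 -> W8
      constructor
      · intro hcon
        have h2 : e (ic1,b) = e (x₀,y) + (3/4:ℝ) • (e (ic1,b) - e (x₀,y)) :=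
          (pt_inj.1 (Subtype.ext_iff.1 hcon)).2
        exact lin_ne1 hune (by norm_num) h2.symm
      · refine edge_mem ha0 ?_
        rw [Subtype.dist_eq]
        refine dist_pt_le ha0 ?_
        rw [dist_comm, dist_lin1, show |(3/4:ℝ) - 1| = 1/4 from by norm_num]
        nlinarith
    · -- 8 : W8 -> W9
      constructor
      · intro hcon
        have h2 : e (x₀,y) + (3/4:ℝ) • (e (ic1,b) - e (x₀,y))
            = e (x₀,y) + (2/4:ℝ) • (e (ic1,b) - e (x₀,y)) :=
          (pt_inj.1 (Subtype.ext_iff.1 hcon)).2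
        exact lin_ne hune (by norm_num) h2
      · refine edge_mem ha0 ?_
        rw [Subtype.dist_eq]
        refine dist_pt_le ha0 ?_
        rw [dist_lin, show |(3/4:ℝ) - 2/4| = 1/4 from by norm_num]
        nlinarith
    · -- 9 : W9 -> W10
      constructor
      · intro hcon
        have h2 : e (x₀,y) + (2/4:ℝ) • (e (ic1,b) - e (x₀,y))
            = e (x₀,y) + (1/4:ℝ) • (e (ic1,b) - e (x₀,y)) :=
          (pt_inj.1 (Subtype.ext_iff.1 hcon)).2
        exact lin_ne hune (by norm_num) h2
      · refine edge_mem ha0 ?_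
        rw [Subtype.dist_eq]
        refine dist_pt_le ha0 ?_
        rw [dist_lin, show |(2/4:ℝ) - 1/4| = 1/4 from by norm_num]
        nlinarith
    · -- 10 : W10 -> W11
      constructor
      · intro hcon
        have h2 : e (x₀,y) + (1/4:ℝ) • (e (ic1,b) - e (x₀,y)) = e (x₀,y) :=
          (pt_inj.1 (Subtype.ext_iff.1 hcon)).2
        exact lin_ne0 hune (by norm_num) h2.symm
      · refine edge_mem ha0 ?_
        rw [Subtype.dist_eq]
        refine dist_pt_le ha0 ?_
        rw [dist_comm, dist_lin0, show |(1/4:ℝ)| = 1/4 from by norm_num]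
        nlinarith
  · intro hne
    refine edge_mem ha0 ?_
    rw [Subtype.dist_eq]
    refine dist_pt_le ha0 ?_
    rw [dist_self]
    nlinarith

set_option maxHeartbeats 2000000 in
open Classical in
lemma chain_eval {D : Type} (e : Set.Icc (0:ℝ) 1 × D → E3)
    (hrange : ∀ p, ∀ i, e p i ∈ Set.Icc (0:ℝ) 1) (hinj : Function.Injective e)
    (x₀ : Set.Icc (0:ℝ) 1) (y y' b : D) (hy' : y' ≠ b) :
    (chainOf (W e hrange x₀ y b)) (W e hrange x₀ y' b 0, W e hrange x₀ y' b 1)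
      = (if y = y' then 1 else 0) ∧
    (chainOf (W e hrange x₀ y b)) (W e hrange x₀ y' b 1, W e hrange x₀ y' b 0) = 0 := by
  have hlt : (x₀:ℝ)/(2*243^2) < 1 := by
    have h1 := x₀.2.2
    have h0 := x₀.2.1
    linarith
  have k01 : (1:ℝ) = (x₀:ℝ)/(2*243^2) → False := fun h => by linarith
  have k10 : (x₀:ℝ)/(2*243^2) = 1 → False := fun h => by linarith
  -- inequalities for the P target
  have hneP2 : (W e hrange x₀ y b 1, W e hrange x₀ y b 2)
      ≠ (W e hrange x₀ y' b 0, W e hrange x₀ y' b 1) := by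
    intro h
    have h2 : (1:ℝ) = (x₀:ℝ)/(2*243^2) :=
      (pt_inj.1 (Subtype.ext_iff.1 (congrArg Prod.fst h))).1
    exact k01 h2
  have hneP3 : (W e hrange x₀ y b 2, W e hrange x₀ y b 3)
      ≠ (W e hrange x₀ y' b 0, W e hrange x₀ y' b 1) := by
    intro h
    exact k01 ((pt_inj.1 (Subtype.ext_iff.1 (congrArg Prod.fst h))).1)
  have hneP4 : (W e hrange x₀ y b 3, W e hrange x₀ y b 4)
      ≠ (W e hrange x₀ y' b 0, W e hrange x₀ y' b 1) := by
    intro h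
    exact k01 ((pt_inj.1 (Subtype.ext_iff.1 (congrArg Prod.fst h))).1)
  have hneP5 : (W e hrange x₀ y b 4, W e hrange x₀ y b 5)
      ≠ (W e hrange x₀ y' b 0, W e hrange x₀ y' b 1) := by
    intro h
    exact k01 ((pt_inj.1 (Subtype.ext_iff.1 (congrArg Prod.fst h))).1)
  have hneP6 : (W e hrange x₀ y b 5, W e hrange x₀ y b 6)
      ≠ (W e hrange x₀ y' b 0, W e hrange x₀ y' b 1) := by
    intro h
    have h2 : (1:ℝ)/(2*243^2) = 1 :=
      (pt_inj.1 (Subtype.ext_iff.1 (congrArg Prod.snd h))).1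
    norm_num at h2
  have hneP7 : (W e hrange x₀ y b 6, W e hrange x₀ y b 7)
      ≠ (W e hrange x₀ y' b 0, W e hrange x₀ y' b 1) := by
    intro h
    have h2 : (0:ℝ) = 1 :=
      (pt_inj.1 (Subtype.ext_iff.1 (congrArg Prod.snd h))).1
    norm_num at h2
  have hneP8 : (W e hrange x₀ y b 7, W e hrange x₀ y b 8)
      ≠ (W e hrange x₀ y' b 0, W e hrange x₀ y' b 1) := by
    intro h
    have h2 : (0:ℝ) = 1 :=
      (pt_inj.1 (Subtype.ext_iff.1 (congrArg Prod.snd h))).1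
    norm_num at h2
  have hneP9 : (W e hrange x₀ y b 8, W e hrange x₀ y b 9)
      ≠ (W e hrange x₀ y' b 0, W e hrange x₀ y' b 1) := by
    intro h
    have h2 : (0:ℝ) = 1 :=
      (pt_inj.1 (Subtype.ext_iff.1 (congrArg Prod.snd h))).1
    norm_num at h2
  have hneP10 : (W e hrange x₀ y b 9, W e hrange x₀ y b 10)
      ≠ (W e hrange x₀ y' b 0, W e hrange x₀ y' b 1) := by
    intro h
    have h2 : (0:ℝ) = 1 :=
      (pt_inj.1 (Subtype.ext_iff.1 (congrArg Prod.snd h))).1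
    norm_num at h2
  have hneP11 : (W e hrange x₀ y b 10, W e hrange x₀ y b 11)
      ≠ (W e hrange x₀ y' b 0, W e hrange x₀ y' b 1) := by
    intro h
    have h2 : (0:ℝ) = 1 :=
      (pt_inj.1 (Subtype.ext_iff.1 (congrArg Prod.snd h))).1
    norm_num at h2
  have hneP12 : (W e hrange x₀ y b 11, W e hrange x₀ y b 0)
      ≠ (W e hrange x₀ y' b 0, W e hrange x₀ y' b 1) := by
    intro h
    exact k10 ((pt_inj.1 (Subtype.ext_iff.1 (congrArg Prod.snd h))).1)
  -- inequalities for the Q target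
  have hneQ1 : (W e hrange x₀ y b 0, W e hrange x₀ y b 1)
      ≠ (W e hrange x₀ y' b 1, W e hrange x₀ y' b 0) := by
    intro h
    exact k10 ((pt_inj.1 (Subtype.ext_iff.1 (congrArg Prod.fst h))).1)
  have hneQ2 : (W e hrange x₀ y b 1, W e hrange x₀ y b 2)
      ≠ (W e hrange x₀ y' b 1, W e hrange x₀ y' b 0) := by
    intro h
    exact k01 ((pt_inj.1 (Subtype.ext_iff.1 (congrArg Prod.snd h))).1)
  have hneQ3 : (W e hrange x₀ y b 2, W e hrange x₀ y b 3)
      ≠ (W e hrange x₀ y' b 1, W e hrange x₀ y' b 0) := by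
    intro h
    exact k01 ((pt_inj.1 (Subtype.ext_iff.1 (congrArg Prod.snd h))).1)
  have hneQ4 : (W e hrange x₀ y b 3, W e hrange x₀ y b 4)
      ≠ (W e hrange x₀ y' b 1, W e hrange x₀ y' b 0) := by
    intro h
    exact k01 ((pt_inj.1 (Subtype.ext_iff.1 (congrArg Prod.snd h))).1)
  have hneQ5 : (W e hrange x₀ y b 4, W e hrange x₀ y b 5)
      ≠ (W e hrange x₀ y' b 1, W e hrange x₀ y' b 0) := by
    intro h
    exact k01 ((pt_inj.1 (Subtype.ext_iff.1 (congrArg Prod.snd h))).1)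
  have hneQ6 : (W e hrange x₀ y b 5, W e hrange x₀ y b 6)
      ≠ (W e hrange x₀ y' b 1, W e hrange x₀ y' b 0) := by
    intro h
    have h2 : e (ic1, b) = e (x₀, y') :=
      (pt_inj.1 (Subtype.ext_iff.1 (congrArg Prod.fst h))).2
    exact hy' (congrArg Prod.snd (hinj h2)).symm
  have hneQ7 : (W e hrange x₀ y b 6, W e hrange x₀ y b 7)
      ≠ (W e hrange x₀ y' b 1, W e hrange x₀ y' b 0) := by
    intro h
    have h2 : (1:ℝ)/(2*243^2) = 1 :=
      (pt_inj.1 (Subtype.ext_iff.1 (congrArg Prod.fst h))).1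
    norm_num at h2
  have hneQ8 : (W e hrange x₀ y b 7, W e hrange x₀ y b 8)
      ≠ (W e hrange x₀ y' b 1, W e hrange x₀ y' b 0) := by
    intro h
    have h2 : (0:ℝ) = 1 :=
      (pt_inj.1 (Subtype.ext_iff.1 (congrArg Prod.fst h))).1
    norm_num at h2
  have hneQ9 : (W e hrange x₀ y b 8, W e hrange x₀ y b 9)
      ≠ (W e hrange x₀ y' b 1, W e hrange x₀ y' b 0) := by
    intro h
    have h2 : (0:ℝ) = 1 :=
      (pt_inj.1 (Subtype.ext_iff.1 (congrArg Prod.fst h))).1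
    norm_num at h2
  have hneQ10 : (W e hrange x₀ y b 9, W e hrange x₀ y b 10)
      ≠ (W e hrange x₀ y' b 1, W e hrange x₀ y' b 0) := by
    intro h
    have h2 : (0:ℝ) = 1 :=
      (pt_inj.1 (Subtype.ext_iff.1 (congrArg Prod.fst h))).1
    norm_num at h2
  have hneQ11 : (W e hrange x₀ y b 10, W e hrange x₀ y b 11)
      ≠ (W e hrange x₀ y' b 1, W e hrange x₀ y' b 0) := by
    intro h
    have h2 : (0:ℝ) = 1 :=
      (pt_inj.1 (Subtype.ext_iff.1 (congrArg Prod.fst h))).1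
    norm_num at h2
  have hneQ12 : (W e hrange x₀ y b 11, W e hrange x₀ y b 0)
      ≠ (W e hrange x₀ y' b 1, W e hrange x₀ y' b 0) := by
    intro h
    have h2 : (0:ℝ) = 1 :=
      (pt_inj.1 (Subtype.ext_iff.1 (congrArg Prod.fst h))).1
    norm_num at h2
  constructor
  · by_cases hyy : y = y'
    · subst hyy
      unfold chainOf
      simp only [Finsupp.add_apply, Finsupp.single_eq_of_ne' hneP2,
        Finsupp.single_eq_of_ne' hneP3, Finsupp.single_eq_of_ne' hneP4,
        Finsupp.single_eq_of_ne' hneP5, Finsupp.single_eq_of_ne' hneP6,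
        Finsupp.single_eq_of_ne' hneP7, Finsupp.single_eq_of_ne' hneP8,
        Finsupp.single_eq_of_ne' hneP9, Finsupp.single_eq_of_ne' hneP10,
        Finsupp.single_eq_of_ne' hneP11, Finsupp.single_eq_same]
      split_ifs with hw
      · simp
      · rw [Finsupp.single_eq_of_ne' hneP12]; simp
    · have hne1 : (W e hrange x₀ y b 0, W e hrange x₀ y b 1)
          ≠ (W e hrange x₀ y' b 0, W e hrange x₀ y' b 1) := by
        intro h
        have h2 : e (x₀, y) = e (x₀, y') :=
          (pt_inj.1 (Subtype.ext_iff.1 (congrArg Prod.fst h))).2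
        exact hyy (congrArg Prod.snd (hinj h2))
      unfold chainOf
      simp only [Finsupp.add_apply, Finsupp.single_eq_of_ne' hne1,
        Finsupp.single_eq_of_ne' hneP2,
        Finsupp.single_eq_of_ne' hneP3, Finsupp.single_eq_of_ne' hneP4,
        Finsupp.single_eq_of_ne' hneP5, Finsupp.single_eq_of_ne' hneP6,
        Finsupp.single_eq_of_ne' hneP7, Finsupp.single_eq_of_ne' hneP8,
        Finsupp.single_eq_of_ne' hneP9, Finsupp.single_eq_of_ne' hneP10,
        Finsupp.single_eq_of_ne' hneP11]
      split_ifs with hw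
      · simp [hyy]
      · rw [Finsupp.single_eq_of_ne' hneP12]; simp [hyy]
  · unfold chainOf
    simp only [Finsupp.add_apply, Finsupp.single_eq_of_ne' hneQ1,
      Finsupp.single_eq_of_ne' hneQ2, Finsupp.single_eq_of_ne' hneQ3,
      Finsupp.single_eq_of_ne' hneQ4, Finsupp.single_eq_of_ne' hneQ5,
      Finsupp.single_eq_of_ne' hneQ6, Finsupp.single_eq_of_ne' hneQ7,
      Finsupp.single_eq_of_ne' hneQ8, Finsupp.single_eq_of_ne' hneQ9,
      Finsupp.single_eq_of_ne' hneQ10, Finsupp.single_eq_of_ne' hneQ11]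
    split_ifs with hw
    · simp
    · rw [Finsupp.single_eq_of_ne' hneQ12]; simp

set_option maxHeartbeats 1600000 in
open Classical in
lemma kill_boundaries {D : Type} (e : Set.Icc (0:ℝ) 1 × D → E3)
    (hrange : ∀ p, ∀ i, e p i ∈ Set.Icc (0:ℝ) 1)
    (he : ∀ p q, ‖e p - e q‖ ≥ (1 / 243) * Real.sqrt |(p.1 : ℝ) - (q.1 : ℝ)|)
    {a : ℝ} (ha : a ∈ Set.Icc (1 - 1/(2*243^2)) 1)
    {x₀ : Set.Icc (0:ℝ) 1} (hx₀ : (x₀ : ℝ) = (1-a)*(2*243^2)) (j b : D) :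
    ∀ x ∈ boundariesOne (ripsComplex (Vt e) a),
      x (W e hrange x₀ j b 0, W e hrange x₀ j b 1)
        - x (W e hrange x₀ j b 1, W e hrange x₀ j b 0) = 0 := by
  rintro x ⟨w, hw, rfl⟩
  have key : ∀ s : Finset (Vt e), s ∈ ripsComplex (Vt e) a → s.card = 3 →
      W e hrange x₀ j b 0 ∈ s → W e hrange x₀ j b 1 ∈ s → False :=
    fun s h1 h2 h3 h4 => no_triangle e he ha hx₀ j rfl rfl h1 h2 h3 h4
  have hexp : bd2 (Vt e) w = w.sum (fun p n =>
      n • (Finsupp.single (p.2.1, p.2.2) 1 - Finsupp.single (p.1, p.2.2) 1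
        + Finsupp.single (p.1, p.2.1) 1)) := by
    rw [bd2, Finsupp.lsum_apply]
    apply Finsupp.sum_congr
    intro p _
    rw [LinearMap.toSpanSingleton_apply]
  rw [hexp, Finsupp.sum_apply, Finsupp.sum_apply, ← Finsupp.sum_sub]
  refine Finset.sum_eq_zero ?_
  intro p hp
  obtain ⟨hcard, hK⟩ := hw p hp
  have h23P : (p.2.1, p.2.2) ≠ (W e hrange x₀ j b 0, W e hrange x₀ j b 1) := by
    intro h
    injection h with h1 h2
    exact key _ hK hcard (h1 ▸ (by simp)) (h2 ▸ (by simp))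
  have h13P : (p.1, p.2.2) ≠ (W e hrange x₀ j b 0, W e hrange x₀ j b 1) := by
    intro h
    injection h with h1 h2
    exact key _ hK hcard (h1 ▸ (by simp)) (h2 ▸ (by simp))
  have h12P : (p.1, p.2.1) ≠ (W e hrange x₀ j b 0, W e hrange x₀ j b 1) := by
    intro h
    injection h with h1 h2
    exact key _ hK hcard (h1 ▸ (by simp)) (h2 ▸ (by simp))
  have h23Q : (p.2.1, p.2.2) ≠ (W e hrange x₀ j b 1, W e hrange x₀ j b 0) := by
    intro h
    injection h with h1 h2
    exact key _ hK hcard (h2 ▸ (by simp)) (h1 ▸ (by simp))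
  have h13Q : (p.1, p.2.2) ≠ (W e hrange x₀ j b 1, W e hrange x₀ j b 0) := by
    intro h
    injection h with h1 h2
    exact key _ hK hcard (h2 ▸ (by simp)) (h1 ▸ (by simp))
  have h12Q : (p.1, p.2.1) ≠ (W e hrange x₀ j b 1, W e hrange x₀ j b 0) := by
    intro h
    injection h with h1 h2
    exact key _ hK hcard (h2 ▸ (by simp)) (h1 ▸ (by simp))
  simp only [Finsupp.smul_apply, Finsupp.add_apply, Finsupp.sub_apply,
    Finsupp.single_eq_of_ne' h23P, Finsupp.single_eq_of_ne' h13P, Finsupp.single_eq_of_ne' h12P,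
    Finsupp.single_eq_of_ne' h23Q, Finsupp.single_eq_of_ne' h13Q, Finsupp.single_eq_of_ne' h12Q]
  simp


lemma stmt_18_aux {D : Type} (hD : Cardinal.mk D = 2 ^ Cardinal.aleph0)
    (e : Set.Icc (0:ℝ) 1 × D → EuclideanSpace ℝ (Fin 3))
    (hrange : ∀ p, ∀ i, e p i ∈ Set.Icc (0:ℝ) 1) (hinj : Function.Injective e)
    (he : ∀ p q, ‖e p - e q‖ ≥ (1 / 243) * Real.sqrt |(p.1 : ℝ) - (q.1 : ℝ)|)
    (a : ℝ) (ha : a ∈ Set.Icc (1 - 1 / (2 * 243 ^ 2)) 1) :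
    2 ^ Cardinal.aleph0 ≤ Module.rank ℤ
      (simplicialH1 (ripsComplex
        (↥(closure (T e) ∪ pt 0 '' cube ∪ pt 1 '' cube)) a)) := by
  classical
  obtain ⟨ha1, ha2⟩ := ha
  have hx₀I : (1-a)*(2*243^2) ∈ Set.Icc (0:ℝ) 1 := by
    constructor
    · nlinarith
    · nlinarith
  set x₀ : Set.Icc (0:ℝ) 1 := ⟨(1-a)*(2*243^2), hx₀I⟩ with hx₀def
  have hx₀ : (x₀:ℝ) = (1-a)*(2*243^2) := rfl
  haveI hDinf : Infinite D := by
    rw [Cardinal.infinite_iff, hD]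
    exact (Cardinal.cantor _).le
  have hbne : Nonempty D := inferInstance
  obtain ⟨b⟩ := hbne
  have hcardι : Cardinal.mk (↥({b}ᶜ : Set D)) = Cardinal.mk D := by
    apply Cardinal.mk_compl_of_infinite
    rw [Cardinal.mk_singleton]
    exact Cardinal.one_lt_aleph0.trans_le (Cardinal.aleph0_le_mk D)
  have hyb : ∀ i : ↥({b}ᶜ : Set D), (i : D) ≠ b := by
    intro i
    have h2 := i.2
    rw [Set.mem_compl_singleton_iff] at h2
    exact h2
  have main := rank_ge_of_dual (ripsComplex (Vt e) a)
    (ι := ↥({b}ᶜ : Set D))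
    (fun i => ⟨chainOf (W e hrange x₀ (i:D) b),
      chain_mem_cycles e hrange hinj ⟨ha1, ha2⟩ hx₀ (hyb i)⟩)
    (fun j => (W e hrange x₀ (j:D) b 0, W e hrange x₀ (j:D) b 1))
    (fun j => (W e hrange x₀ (j:D) b 1, W e hrange x₀ (j:D) b 0))
    (fun j => kill_boundaries e hrange he ⟨ha1, ha2⟩ hx₀ (j:D) b)
    (fun j i => by
      have hev := chain_eval e hrange hinj x₀ (i:D) (j:D) b (hyb j)
      rw [hev.1, hev.2, sub_zero]
      by_cases hij : i = j
      · simp [hij]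
      · rw [if_neg (fun h => hij (Subtype.ext h)), if_neg hij])
  calc (2:Cardinal) ^ Cardinal.aleph0 = Cardinal.mk D := hD.symm
    _ = Cardinal.mk (↥({b}ᶜ : Set D)) := hcardι.symm
    _ ≤ _ := main

theorem stmt_18 {D : Type} (hD : Cardinal.mk D = 2 ^ Cardinal.aleph0)
    (e : Set.Icc (0:ℝ) 1 × D → EuclideanSpace ℝ (Fin 3))
    (hrange : ∀ p, ∀ i, e p i ∈ Set.Icc (0:ℝ) 1) (hinj : Function.Injective e)
    (he : ∀ p q, ‖e p - e q‖ ≥ (1 / 243) * Real.sqrt |(p.1 : ℝ) - (q.1 : ℝ)|)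
    (a : ℝ) (ha : a ∈ Set.Icc (1 - 1 / (2 * 243 ^ 2)) 1) :
    2 ^ Cardinal.aleph0 ≤ Module.rank ℤ
      (simplicialH1 (ripsComplex
        (↥(closure (T e) ∪ pt 0 '' cube ∪ pt 1 '' cube)) a)) := stmt_18_aux hD e hrange hinj he a ha
end
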